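/- arXiv:1503.01519 — 6 statements merged into one kernel-verified Lean document; each statement's English description precedes it below -/
import Mathlib

section
/- Let Ω ⊆ ℂ be a hyperbolic domain and let p : 𝔻 → Ω be a surjective holomorphic covering map from the unit disk. Then Ĉ(Ω) := inf_{z∈𝔻} ε_Ω(p(z)) · (1+|p(z)|²) / ((1−|z|²)·|p′(z)|) satisfies Ĉ(Ω) ≤ 2·C(Ω), where C(Ω) := inf_{z∈𝔻} d_Ω(p(z)) / ((1−|z|²)·|p′(z)|). -/
open Set Metric
open scoped Classical

/-- The quantity `τ(z,w) = |z-w| / |1 + z·conj w|`, valued in `ℝ≥0∞` so that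
antipodal pairs (where the denominator vanishes) get the value `∞`. -/
noncomputable def tauE (z w : ℂ) : ENNReal :=
  ENNReal.ofReal (‖z - w‖) / ENNReal.ofReal (‖1 + z * (starRingEnd ℂ) w‖)

/-- `ε_Ω(z)`: the infimum of `τ(z,a)` over the boundary of `Ω` in the Riemann sphere,
i.e. over the frontier of `Ω` in `ℂ`, together with `∞` (where `τ(z,∞) = 1/|z|`)
when `Ω` is unbounded. -/
noncomputable def epsOm (Ω : Set ℂ) (z : ℂ) : ℝ :=
  ((⨅ a ∈ frontier Ω, tauE z a) ⊓
    (if Bornology.IsBounded Ω then ⊤ else 1 / ENNReal.ofReal ‖z‖)).toReal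

/-- A domain in `ℂ` is hyperbolic if it is open, connected,
and its complement contains at least two points. -/
def IsHyperbolicDomain (Ω : Set ℂ) : Prop :=
  IsOpen Ω ∧ IsConnected Ω ∧ Set.Nontrivial Ωᶜ

open scoped Pointwise

lemma tauE_toReal {z a : ℂ} (h : 0 < ‖1 + z * (starRingEnd ℂ) a‖) :
    (tauE z a).toReal = ‖z - a‖ / ‖1 + z * (starRingEnd ℂ) a‖ := by
  rw [tauE, ENNReal.toReal_div, ENNReal.toReal_ofReal (by positivity), ENNReal.toReal_ofReal h.le]

lemma tauE_ne_top {z a : ℂ} (h : 0 < ‖1 + z * (starRingEnd ℂ) a‖) :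
    tauE z a ≠ ⊤ := by
  rw [tauE]
  exact (ENNReal.div_lt_top ENNReal.ofReal_ne_top (by simpa [ENNReal.ofReal_eq_zero, not_le] using h)).ne

lemma epsOm_le {Ω : Set ℂ} {w a : ℂ} (ha : a ∈ frontier Ω)
    (h : 0 < ‖1 + w * (starRingEnd ℂ) a‖) :
    epsOm Ω w ≤ ‖w - a‖ / ‖1 + w * (starRingEnd ℂ) a‖ := by
  rw [← tauE_toReal h, epsOm]
  exact ENNReal.toReal_mono (tauE_ne_top h) (le_trans inf_le_left (biInf_le _ ha))

lemma epsOm_le_unbounded {Ω : Set ℂ} {w : ℂ} (h : ¬ Bornology.IsBounded Ω)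
    (hw : 0 < ‖w‖) : epsOm Ω w ≤ 1 / ‖w‖ := by
  rw [epsOm, if_neg h]
  have h1 : (1 / ENNReal.ofReal (‖w‖)).toReal = 1 / ‖w‖ := by
    rw [ENNReal.toReal_div, ENNReal.toReal_one, ENNReal.toReal_ofReal hw.le]
  rw [← h1]
  refine ENNReal.toReal_mono ?_ inf_le_right
  simp [ENNReal.div_eq_top, hw.ne', ENNReal.ofReal_eq_zero, not_le, hw, norm_pos_iff.mp hw]

lemma ray_exit {Ω : Set ℂ} (hO : IsOpen Ω) (hb : Bornology.IsBounded Ω) {w : ℂ}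
    (hw : w ∈ Ω) (hw0 : w ≠ 0) :
    ∃ a ∈ frontier Ω, ∃ t : ℝ, 0 < t ∧ ‖w - a‖ = t ∧
      w * (starRingEnd ℂ) a = ((‖w‖ ^ 2 + t * ‖w‖ : ℝ) : ℂ) := by
  set W := ‖w‖ with hW
  have hW0 : 0 < W := by simpa [hW] using hw0
  set f : ℝ → ℂ := fun t => w + ((t / W : ℝ) : ℂ) * w with hf
  have hsub : ∀ s t : ℝ, f s - f t = (((s - t) / W : ℝ) : ℂ) * w := by
    intro s t
    simp only [hf]
    push_cast
    field_simp
    ring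
  have habs : ∀ s t : ℝ, ‖f s - f t‖ = |s - t| := by
    intro s t
    rw [hsub, norm_mul, Complex.norm_real, Real.norm_eq_abs, abs_div, abs_of_nonneg hW0.le, ← hW,
      div_mul_cancel₀ _ hW0.ne']
  have hdist : ∀ s t : ℝ, dist (f s) (f t) = |s - t| := by
    intro s t; rw [Complex.dist_eq, habs]
  have hf0 : f 0 = w := by simp [hf]
  have hdistw : ∀ t : ℝ, dist (f t) w = |t| := by
    intro t
    conv_lhs => rw [← hf0]
    rw [hdist, sub_zero]
  have hfabs : ∀ t : ℝ, 0 ≤ t → ‖f t‖ = W + t := by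
    intro t ht
    have hfW : f (-W) = 0 := by
      simp only [hf, neg_div, div_self hW0.ne']
      push_cast
      ring
    calc ‖f t‖ = ‖f t - f (-W)‖ := by rw [hfW, sub_zero]
    _ = |t - (-W)| := habs t (-W)
    _ = W + t := by rw [abs_of_nonneg (by linarith)]; ring
  set T : Set ℝ := {t : ℝ | 0 ≤ t ∧ f t ∉ Ω} with hT
  obtain ⟨R, hR⟩ := hb.subset_closedBall 0
  have hTne : T.Nonempty := by
    refine ⟨|R| + 1, by positivity, fun hmem => ?_⟩
    have h1 := hfabs (|R| + 1) (by positivity)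
    have h2 := hR hmem
    rw [mem_closedBall, Complex.dist_eq, sub_zero, h1] at h2
    nlinarith [abs_nonneg R, le_abs_self R]
  have hTbdd : BddBelow T := ⟨0, fun t ht => ht.1⟩
  set t₀ : ℝ := sInf T with ht₀
  obtain ⟨δ, hδ0, hδ⟩ := Metric.isOpen_iff.mp hO w hw
  have hδle : δ ≤ t₀ := by
    refine le_csInf hTne fun t ht => ?_
    by_contra hlt
    push_neg at hlt
    exact ht.2 (hδ (by rw [mem_ball, hdistw, abs_of_nonneg ht.1]; linarith))
  have ht₀pos : 0 < t₀ := lt_of_lt_of_le hδ0 hδle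
  have hin : ∀ t : ℝ, 0 ≤ t → t < t₀ → f t ∈ Ω := by
    intro t ht0 htlt
    by_contra hnot
    exact absurd (csInf_le hTbdd ⟨ht0, hnot⟩) (not_le.mpr htlt)
  have hnotin : f t₀ ∉ Ω := by
    intro hmem
    obtain ⟨δ', hδ'0, hδ'⟩ := Metric.isOpen_iff.mp hO _ hmem
    obtain ⟨s, hsT, hslt⟩ := exists_lt_of_csInf_lt hTne (show sInf T < t₀ + δ' by linarith)
    have hts : t₀ ≤ s := csInf_le hTbdd hsT
    exact hsT.2 (hδ' (by rw [mem_ball, hdist, abs_of_nonneg (by linarith)]; linarith))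
  have hcl : f t₀ ∈ closure Ω := by
    rw [Metric.mem_closure_iff]
    intro ε hε
    refine ⟨f (max 0 (t₀ - ε / 2)), hin _ (le_max_left _ _) (max_lt ht₀pos (by linarith)), ?_⟩
    rw [hdist]
    have h1 : t₀ - ε / 2 ≤ max 0 (t₀ - ε / 2) := le_max_right _ _
    have h2 : max 0 (t₀ - ε / 2) < t₀ := max_lt ht₀pos (by linarith)
    rw [abs_of_nonneg (by linarith)]
    linarith
  refine ⟨f t₀, ?_, t₀, ht₀pos, ?_, ?_⟩
  · rw [frontier, hO.interior_eq]; exact ⟨hcl, hnotin⟩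
  · rw [← hf0, show f 0 - f t₀ = -(f t₀ - f 0) by ring, norm_neg, habs, sub_zero,
      abs_of_nonneg ht₀pos.le]
  · have h1 : w * (starRingEnd ℂ) (f t₀) = (w * (starRingEnd ℂ) w) * (1 + ((t₀ / W : ℝ) : ℂ)) := by
      simp only [hf, map_add, map_mul, Complex.conj_ofReal]
      ring
    have hWc : (W : ℂ) ≠ 0 := by exact_mod_cast hW0.ne'
    rw [h1, Complex.mul_conj, ← Complex.sq_norm, ← hW]
    push_cast
    field_simp

lemma key_ineq (Ω : Set ℂ) (hO : IsOpen Ω) (hfr : (frontier Ω).Nonempty) {w : ℂ} (hw : w ∈ Ω) :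
    epsOm Ω w * (1 + ‖w‖ ^ 2) ≤ 2 * infDist w (frontier Ω) := by
  set W := ‖w‖ with hW
  set d := infDist w (frontier Ω) with hd
  have hWnn : 0 ≤ W := norm_nonneg w
  have hd0 : 0 ≤ d := infDist_nonneg
  have heps0 : 0 ≤ epsOm Ω w := ENNReal.toReal_nonneg
  by_cases hcase : 2 * W * d ≤ 1 + W ^ 2
  · obtain ⟨a, haf, hda⟩ := isClosed_frontier.exists_infDist_eq_dist hfr w
    have habs : ‖w - a‖ = d := by rw [hd, hda, Complex.dist_eq]
    have hden : (1 + W ^ 2) - W * d ≤ ‖1 + w * (starRingEnd ℂ) a‖ := by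
      have h1 : (1 : ℂ) + w * (starRingEnd ℂ) a
          = (1 + w * (starRingEnd ℂ) w) - w * ((starRingEnd ℂ) w - (starRingEnd ℂ) a) := by ring
      have h2 : ‖1 + w * (starRingEnd ℂ) w‖ = 1 + W ^ 2 := by
        rw [Complex.mul_conj, ← Complex.sq_norm, ← hW]
        rw [show (1 : ℂ) + ((W ^ 2 : ℝ) : ℂ) = ((1 + W ^ 2 : ℝ) : ℂ) by push_cast; ring,
          Complex.norm_real, Real.norm_eq_abs, abs_of_nonneg (by positivity)]
      have h3 : ‖w * ((starRingEnd ℂ) w - (starRingEnd ℂ) a)‖ = W * d := by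
        rw [norm_mul, ← map_sub, Complex.norm_conj, ← hW, habs]
      calc (1 + W ^ 2) - W * d
          = ‖1 + w * (starRingEnd ℂ) w‖
            - ‖w * ((starRingEnd ℂ) w - (starRingEnd ℂ) a)‖ := by rw [h2, h3]
        _ ≤ ‖1 + w * (starRingEnd ℂ) a‖ := by
            rw [h1]; exact norm_sub_norm_le _ _
    have hdenpos : 0 < ‖1 + w * (starRingEnd ℂ) a‖ := by nlinarith
    have hle := epsOm_le haf hdenpos
    rw [habs] at hle
    have hem : epsOm Ω w * ‖1 + w * (starRingEnd ℂ) a‖ ≤ d :=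
      (le_div_iff₀ hdenpos).mp hle
    nlinarith [mul_le_mul_of_nonneg_left hden heps0]
  · push_neg at hcase
    have hW0 : 0 < W := by nlinarith
    by_cases hb : Bornology.IsBounded Ω
    · obtain ⟨a, haf, t, ht0, habs, hconj⟩ := ray_exit hO hb hw (by simpa [hW] using hW0.ne')
      have hd_le : d ≤ t := by
        rw [← habs, ← Complex.dist_eq]; exact infDist_le_dist_of_mem haf
      have habs1 : ‖1 + w * (starRingEnd ℂ) a‖ = 1 + W ^ 2 + t * W := by
        rw [hconj, ← hW, show (1 : ℂ) + ((W ^ 2 + t * W : ℝ) : ℂ) = ((1 + W ^ 2 + t * W : ℝ) : ℂ)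
          by push_cast; ring, Complex.norm_real, Real.norm_eq_abs, abs_of_pos (by nlinarith)]
      have hdenpos : 0 < ‖1 + w * (starRingEnd ℂ) a‖ := by rw [habs1]; nlinarith
      have hle := epsOm_le haf hdenpos
      rw [habs, habs1] at hle
      have hem : epsOm Ω w * (1 + W ^ 2 + t * W) ≤ t := (le_div_iff₀ (by nlinarith)).mp hle
      nlinarith [mul_nonneg heps0 hd0, mul_nonneg (mul_nonneg heps0 hd0) hW0.le,
        mul_le_mul_of_nonneg_left hd_le heps0]
    · have hle := epsOm_le_unbounded hb (by rwa [← hW])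
      have hem : epsOm Ω w * W ≤ 1 := (le_div_iff₀ hW0).mp hle
      nlinarith [mul_le_mul_of_nonneg_right hem hd0]

theorem hatC_le_two_C (Ω : Set ℂ) (hΩ : IsHyperbolicDomain Ω) (p : ℂ → ℂ)
    (hmaps : MapsTo p (ball (0 : ℂ) 1) Ω)
    (hsurj : SurjOn p (ball (0 : ℂ) 1) Ω)
    (hdiff : DifferentiableOn ℂ p (ball (0 : ℂ) 1))
    (hcov : IsCoveringMap (Set.MapsTo.restrict p (ball (0 : ℂ) 1) Ω hmaps)) :
    sInf ((fun z => epsOm Ω (p z) * (1 + ‖p z‖ ^ 2) /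
        ((1 - ‖z‖ ^ 2) * ‖deriv p z‖)) '' ball (0 : ℂ) 1) ≤
      2 * sInf ((fun z => Metric.infDist (p z) (frontier Ω) /
        ((1 - ‖z‖ ^ 2) * ‖deriv p z‖)) '' ball (0 : ℂ) 1) := by
  obtain ⟨hO, hconn, hnontriv⟩ := hΩ
  have hfr : (frontier Ω).Nonempty := by
    rcases Set.eq_empty_or_nonempty (frontier Ω) with h | h
    · have hclopen : IsClopen Ω := isClopen_iff_frontier_eq_empty.mpr h
      rcases isClopen_iff.mp hclopen with rfl | rfl
      · exact absurd hconn.nonempty (by simp)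
      · obtain ⟨x, hx, _⟩ := hnontriv
        simp at hx
    · exact h
  set F : ℂ → ℝ := fun z => epsOm Ω (p z) * (1 + ‖p z‖ ^ 2) /
      ((1 - ‖z‖ ^ 2) * ‖deriv p z‖) with hF
  set G : ℂ → ℝ := fun z => Metric.infDist (p z) (frontier Ω) /
      ((1 - ‖z‖ ^ 2) * ‖deriv p z‖) with hG
  have hDnn : ∀ z ∈ ball (0 : ℂ) 1, 0 ≤ (1 - ‖z‖ ^ 2) * ‖deriv p z‖ := by
    intro z hz
    rw [mem_ball, Complex.dist_eq, sub_zero] at hz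
    have : ‖z‖ ^ 2 ≤ 1 := by nlinarith [norm_nonneg z]
    exact mul_nonneg (by linarith) (norm_nonneg _)
  have hpt : ∀ z ∈ ball (0 : ℂ) 1, F z ≤ 2 * G z := by
    intro z hz
    set D := (1 - ‖z‖ ^ 2) * ‖deriv p z‖ with hD
    rcases (hDnn z hz).eq_or_lt with h0 | hpos
    · have h0' : D = 0 := by rw [hD, ← h0]
      simp only [hF, hG, ← hD, h0', div_zero, mul_zero, le_refl]
    · have hkey := key_ineq Ω hO hfr (hmaps hz)
      simp only [hF, hG, ← hD]
      rw [mul_div_assoc']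
      gcongr
  have hFim : (F '' ball (0 : ℂ) 1).Nonempty := ⟨F 0, mem_image_of_mem F (by simp)⟩
  have hGim : (G '' ball (0 : ℂ) 1).Nonempty := ⟨G 0, mem_image_of_mem G (by simp)⟩
  have hbddF : BddBelow (F '' ball (0 : ℂ) 1) := by
    refine ⟨0, fun y hy => ?_⟩
    obtain ⟨z, hz, rfl⟩ := hy
    exact div_nonneg (mul_nonneg ENNReal.toReal_nonneg (by positivity)) (hDnn z hz)
  have h2 : 2 * sInf (G '' ball (0 : ℂ) 1) = sInf ((fun x => (2 : ℝ) * x) '' (G '' ball (0 : ℂ) 1)) := by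
    rw [show (fun x => (2 : ℝ) * x) '' (G '' ball (0 : ℂ) 1) = (2 : ℝ) • (G '' ball (0 : ℂ) 1) by
        ext y; simp [Set.mem_smul_set, smul_eq_mul],
      Real.sInf_smul_of_nonneg (by norm_num), smul_eq_mul]
  rw [h2]
  refine le_csInf (hGim.image _) fun y hy => ?_
  rw [Set.image_image] at hy
  obtain ⟨z, hz, rfl⟩ := hy
  exact le_trans (csInf_le hbddF (mem_image_of_mem F hz)) (hpt z hz)
end

section
/- Let Ω ⊆ ℂ be a hyperbolic domain and let p : 𝔻 → Ω be a surjective holomorphic covering map from the unit disk. Then C(Ω) · σ(Ĉ∖Ω) ≤ 4·C̃(Ω), where C(Ω) := inf_{z∈𝔻} d_Ω(p(z)) / ((1−|z|²)·|p′(z)|), C̃(Ω) := inf_{z∈𝔻} δ_Ω(p(z)) · (1+|p(z)|²) / ((1−|z|²)·|p′(z)|), and σ(Ĉ∖Ω) is the spherical diameter of the complement of Ω in the Riemann sphere. -/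
open Set Metric
open scoped Classical

/-- The chordal (spherical) distance `σ(z,w) = |z-w| / √((1+|z|²)(1+|w|²))`. -/
noncomputable def sph (z w : ℂ) : ℝ :=
  ‖z - w‖ / Real.sqrt ((1 + ‖z‖ ^ 2) * (1 + ‖w‖ ^ 2))

/-- `δ_Ω(z)`: infimum of `σ(z,a)` over the boundary of `Ω` in the Riemann sphere,
where the value `σ(z,∞) = 1/√(1+|z|²)` is included when `Ω` is unbounded. -/
noncomputable def deltaOm (Ω : Set ℂ) (z : ℂ) : ℝ :=
  sInf ((fun a => sph z a) '' frontier Ω ∪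
    (if Bornology.IsBounded Ω then ∅ else {1 / Real.sqrt (1 + ‖z‖ ^ 2)}))

/-- The spherical diameter of the complement of `Ω` in the Riemann sphere:
the supremum of `σ(a,b)` over `a, b ∈ (ℂ∖Ω) ∪ {∞}`, where `σ(a,∞) = 1/√(1+|a|²)`
and `σ(∞,∞) = 0`. -/
noncomputable def sphDiamCompl (Ω : Set ℂ) : ℝ :=
  sSup ({ s | ∃ a ∈ Ωᶜ, ∃ b ∈ Ωᶜ, s = sph a b } ∪
    { s | ∃ a ∈ Ωᶜ, s = 1 / Real.sqrt (1 + ‖a‖ ^ 2) } ∪ {(0 : ℝ)})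

noncomputable def sq1 (z : ℂ) : ℝ := Real.sqrt (1 + ‖z‖ ^ 2)

lemma one_le_sq1 (z : ℂ) : 1 ≤ sq1 z :=
  Real.le_sqrt_of_sq_le (by nlinarith [sq_nonneg (‖z‖)])

lemma sq1_pos (z : ℂ) : 0 < sq1 z := lt_of_lt_of_le one_pos (one_le_sq1 z)

lemma sq1_sq (z : ℂ) : sq1 z ^ 2 = 1 + ‖z‖ ^ 2 := Real.sq_sqrt (by positivity)

lemma abs_le_sq1 (z : ℂ) : ‖z‖ ≤ sq1 z :=
  Real.le_sqrt_of_sq_le (by linarith)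

lemma sq1_mul (x y : ℂ) :
    sq1 x * sq1 y = Real.sqrt ((1 + ‖x‖ ^ 2) * (1 + ‖y‖ ^ 2)) := by
  rw [sq1, sq1, ← Real.sqrt_mul (by positivity)]

lemma sph_eq (z w : ℂ) : sph z w = ‖z - w‖ / (sq1 z * sq1 w) := by
  rw [sph, sq1_mul]

lemma sph_nonneg (z w : ℂ) : 0 ≤ sph z w := by
  rw [sph_eq]
  exact div_nonneg (norm_nonneg _) (le_of_lt (mul_pos (sq1_pos z) (sq1_pos w)))

lemma sph_comm (z w : ℂ) : sph z w = sph w z := by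
  rw [sph_eq, sph_eq, norm_sub_rev, mul_comm]

/-- Cauchy–Schwarz flavored: `1 + |x||y| ≤ √(1+|x|²)√(1+|y|²)`. -/
lemma one_add_mul_le (x y : ℂ) : 1 + ‖x‖ * ‖y‖ ≤ sq1 x * sq1 y := by
  have hx := norm_nonneg x
  have hy := norm_nonneg y
  rw [sq1_mul]
  exact Real.le_sqrt_of_sq_le (by nlinarith [sq_nonneg (‖x‖ - ‖y‖)])

/-- `|x - y| ≤ √(1+|x|²)√(1+|y|²)`, i.e. chordal distance ≤ 1 before dividing. -/
lemma abs_sub_le_sq1 (x y : ℂ) : ‖x - y‖ ≤ sq1 x * sq1 y := by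
  have h : ‖x - y‖ ≤ ‖x‖ + ‖y‖ := by
    simpa [sub_eq_add_neg] using norm_add_le x (-y)
  have hx := norm_nonneg x
  have hy := norm_nonneg y
  refine h.trans ?_
  rw [sq1_mul]
  exact Real.le_sqrt_of_sq_le (by nlinarith [sq_nonneg (1 - ‖x‖ * ‖y‖)])

lemma sph_le_one (z w : ℂ) : sph z w ≤ 1 := by
  rw [sph_eq]
  exact div_le_one_of_le₀ (abs_sub_le_sq1 z w) (le_of_lt (mul_pos (sq1_pos z) (sq1_pos w)))

lemma sq1_le_add (x y : ℂ) : sq1 x ≤ sq1 y + ‖x - y‖ := by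
  have hb := abs_le_sq1 y
  have hc := norm_nonneg (x - y)
  have hy := norm_nonneg y
  have ha : ‖x‖ ≤ ‖y‖ + ‖x - y‖ := by
    simpa [add_comm] using norm_add_le (x - y) y
  have hsb := sq1_pos y
  rw [sq1]
  refine Real.sqrt_le_sqrt (show 1 + ‖x‖ ^ 2 ≤ (sq1 y + ‖x - y‖) ^ 2 from ?_)
    |>.trans ?_
  · have h2 : sq1 y ^ 2 = 1 + ‖y‖ ^ 2 := sq1_sq y
    nlinarith [norm_nonneg x]
  · rw [Real.sqrt_sq (by positivity)]

/-- Chordal triangle inequality (through `α`). -/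
lemma sph_triangle (α β γ : ℂ) : sph β γ ≤ sph β α + sph α γ := by
  have hca : (starRingEnd ℂ) α * α = ((‖α‖ ^ 2 : ℝ) : ℂ) := by
    rw [mul_comm, Complex.mul_conj, Complex.normSq_eq_norm_sq]
  have hid : (β - γ) * (1 + (starRingEnd ℂ) α * α) =
      (β - α) * (1 + (starRingEnd ℂ) α * γ) + (α - γ) * (1 + (starRingEnd ℂ) α * β) := by
    ring
  have h1 : ‖1 + (starRingEnd ℂ) α * α‖ = 1 + ‖α‖ ^ 2 := by
    rw [hca, ← Complex.ofReal_one, ← Complex.ofReal_add, Complex.norm_real, Real.norm_eq_abs,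
      abs_of_nonneg (by positivity)]
  have habs : ‖β - γ‖ * (1 + ‖α‖ ^ 2) ≤
      ‖β - α‖ * ‖1 + (starRingEnd ℂ) α * γ‖ +
      ‖α - γ‖ * ‖1 + (starRingEnd ℂ) α * β‖ := by
    calc ‖β - γ‖ * (1 + ‖α‖ ^ 2)
        = ‖(β - γ) * (1 + (starRingEnd ℂ) α * α)‖ := by rw [norm_mul, h1]
      _ = ‖(β - α) * (1 + (starRingEnd ℂ) α * γ) +
            (α - γ) * (1 + (starRingEnd ℂ) α * β)‖ := by rw [hid]
      _ ≤ _ := by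
          refine (norm_add_le _ _).trans ?_
          rw [norm_mul, norm_mul]
  have hb1 : ‖1 + (starRingEnd ℂ) α * γ‖ ≤ sq1 α * sq1 γ := by
    refine (norm_add_le 1 _).trans ?_
    rw [norm_one, norm_mul, Complex.norm_conj]
    exact one_add_mul_le α γ
  have hb2 : ‖1 + (starRingEnd ℂ) α * β‖ ≤ sq1 α * sq1 β := by
    refine (norm_add_le 1 _).trans ?_
    rw [norm_one, norm_mul, Complex.norm_conj]
    exact one_add_mul_le α β
  have hA := sq1_pos α
  have hB := sq1_pos β
  have hG := sq1_pos γ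
  have hA2 : (1 : ℝ) + ‖α‖ ^ 2 = sq1 α ^ 2 := (sq1_sq α).symm
  have hkey : ‖β - γ‖ * sq1 α ^ 2 ≤
      ‖β - α‖ * (sq1 α * sq1 γ) + ‖α - γ‖ * (sq1 α * sq1 β) := by
    rw [← hA2]
    refine habs.trans (add_le_add ?_ ?_)
    · exact mul_le_mul_of_nonneg_left hb1 (norm_nonneg _)
    · exact mul_le_mul_of_nonneg_left hb2 (norm_nonneg _)
  rw [sph_eq, sph_eq, sph_eq, div_add_div _ _ (by positivity) (by positivity),
    div_le_div_iff₀ (by positivity) (by positivity)]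
  refine le_trans (le_of_eq (by ring)) (le_trans
    (mul_le_mul_of_nonneg_right hkey (le_of_lt (mul_pos hB hG))) (le_of_eq (by ring)))

/-- mixed triangle: `σ(β,∞) ≤ σ(β,α) + σ(α,∞)`. -/
lemma sph_inf_triangle (α β : ℂ) : 1 / sq1 β ≤ sph β α + 1 / sq1 α := by
  have hA := sq1_pos α
  have hB := sq1_pos β
  have key : sq1 α ≤ sq1 β + ‖β - α‖ := by
    simpa [norm_sub_rev] using sq1_le_add α β
  rw [sph_eq]
  rw [div_add_div _ _ (by positivity) (by positivity), div_le_div_iff₀ hB (by positivity)]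
  nlinarith [norm_nonneg (β - α), mul_le_mul_of_nonneg_right key (le_of_lt (mul_pos hA hB))]

/-- `σ(β,γ) ≤ σ(β,∞) + σ(∞,γ)`. -/
lemma sph_le_inv_add_inv (β γ : ℂ) : sph β γ ≤ 1 / sq1 β + 1 / sq1 γ := by
  have hB := sq1_pos β
  have hG := sq1_pos γ
  have h : ‖β - γ‖ ≤ sq1 β + sq1 γ := by
    have h1 : ‖β - γ‖ ≤ ‖β‖ + ‖γ‖ := by
      simpa [sub_eq_add_neg] using norm_add_le β (-γ)
    exact h1.trans (add_le_add (abs_le_sq1 β) (abs_le_sq1 γ))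
  rw [sph_eq, div_add_div _ _ (by positivity) (by positivity),
    div_le_div_iff₀ (by positivity) (by positivity)]
  nlinarith [mul_le_mul_of_nonneg_right h (le_of_lt (mul_pos hB hG))]

lemma step (d : ℝ) (w α x : ℂ) (hd0 : 0 ≤ d) (hα : d ≤ ‖w - α‖)
    (hx : d ≤ ‖w - x‖) :
    d * sph α x ≤ 2 * (sph w α * (1 + ‖w‖ ^ 2)) := by
  have hs := sq1_pos w
  have hA := sq1_pos α
  have hX := sq1_pos x
  have hc1 := norm_nonneg (w - α)
  have hc2 := norm_nonneg (w - x)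
  have h1 : ‖α - x‖ ≤ ‖w - α‖ + ‖w - x‖ := by
    calc ‖α - x‖ ≤ ‖α - w‖ + ‖w - x‖ :=
          norm_sub_le_norm_sub_add_norm_sub α w x
      _ = _ := by rw [norm_sub_rev α w]
  have h2 := abs_sub_le_sq1 w x
  have h3 : d * ‖α - x‖ ≤ 2 * (‖w - α‖ * (sq1 w * sq1 x)) := by
    have t1 : d * ‖α - x‖ ≤ d * ‖w - α‖ + d * ‖w - x‖ := by
      nlinarith
    have t2 : d * ‖w - α‖ ≤ (sq1 w * sq1 x) * ‖w - α‖ :=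
      mul_le_mul_of_nonneg_right (hx.trans h2) hc1
    have t3 : d * ‖w - x‖ ≤ ‖w - α‖ * ‖w - x‖ :=
      mul_le_mul_of_nonneg_right hα hc2
    have t4 : ‖w - α‖ * ‖w - x‖ ≤ ‖w - α‖ * (sq1 w * sq1 x) :=
      mul_le_mul_of_nonneg_left h2 hc1
    linarith
  rw [sph_eq, sph_eq, ← sq1_sq w]
  have e1 : d * (‖α - x‖ / (sq1 α * sq1 x)) =
      (d * ‖α - x‖) / (sq1 α * sq1 x) := by ring
  have e2 : 2 * (‖w - α‖ / (sq1 w * sq1 α) * sq1 w ^ 2) =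
      (2 * (‖w - α‖ * sq1 w ^ 2)) / (sq1 w * sq1 α) := by ring
  rw [e1, e2, div_le_div_iff₀ (by positivity) (by positivity)]
  refine le_trans (mul_le_mul_of_nonneg_right h3 (le_of_lt (mul_pos hs hA))) (le_of_eq (by ring))

lemma caseA (d : ℝ) (w α β γ : ℂ) (hd0 : 0 ≤ d) (hα : d ≤ ‖w - α‖)
    (hβ : d ≤ ‖w - β‖) (hγ : d ≤ ‖w - γ‖) :
    d * sph β γ ≤ 4 * (sph w α * (1 + ‖w‖ ^ 2)) := by
  have e1 := step d w α β hd0 hα hβ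
  have e2 := step d w α γ hd0 hα hγ
  have h : d * sph β γ ≤ d * (sph β α + sph α γ) :=
    mul_le_mul_of_nonneg_left (sph_triangle α β γ) hd0
  rw [sph_comm β α] at h
  linarith

lemma caseB (d : ℝ) (w α β : ℂ) (hd0 : 0 ≤ d) (hα : d ≤ ‖w - α‖)
    (hβ : d ≤ ‖w - β‖) :
    d * (1 / sq1 β) ≤ 4 * (sph w α * (1 + ‖w‖ ^ 2)) := by
  have hs := sq1_pos w
  have hA := sq1_pos α
  have hc1 := norm_nonneg (w - α)
  have e1 := step d w α β hd0 hα hβ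
  have h3 : d * (1 / sq1 α) ≤ sph w α * (1 + ‖w‖ ^ 2) := by
    rw [sph_eq, ← sq1_sq w]
    have e2 : d * (1 / sq1 α) = d / sq1 α := by ring
    have e3 : ‖w - α‖ / (sq1 w * sq1 α) * sq1 w ^ 2 =
        (‖w - α‖ * sq1 w ^ 2) / (sq1 w * sq1 α) := by ring
    rw [e2, e3, div_le_div_iff₀ hA (by positivity)]
    nlinarith [mul_le_mul_of_nonneg_right hα (le_of_lt (mul_pos hs hA)), one_le_sq1 w,
      mul_nonneg (mul_nonneg hc1 hs.le) hA.le]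
  have h : d * (1 / sq1 β) ≤ d * (sph β α + 1 / sq1 α) :=
    mul_le_mul_of_nonneg_left (sph_inf_triangle α β) hd0
  rw [sph_comm β α] at h
  have hT : 0 ≤ sph w α * (1 + ‖w‖ ^ 2) :=
    mul_nonneg (sph_nonneg _ _) (by positivity)
  linarith

lemma caseC1 (d : ℝ) (w β γ : ℂ) (hd0 : 0 ≤ d)
    (hβ : d ≤ ‖w - β‖) (hγ : d ≤ ‖w - γ‖) :
    d * sph β γ ≤ 4 * ((1 / sq1 w) * (1 + ‖w‖ ^ 2)) := by
  have hs := sq1_pos w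
  have hB := sq1_pos β
  have hG := sq1_pos γ
  have h2 : d * (1 / sq1 β) ≤ sq1 w := by
    rw [mul_one_div, div_le_iff₀ hB]
    exact hβ.trans (abs_sub_le_sq1 w β)
  have h3 : d * (1 / sq1 γ) ≤ sq1 w := by
    rw [mul_one_div, div_le_iff₀ hG]
    exact hγ.trans (abs_sub_le_sq1 w γ)
  have hrhs : 4 * ((1 / sq1 w) * (1 + ‖w‖ ^ 2)) = 4 * sq1 w := by
    rw [← sq1_sq w]
    field_simp
  rw [hrhs]
  have h := mul_le_mul_of_nonneg_left (sph_le_inv_add_inv β γ) hd0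
  linarith

lemma caseC2 (d : ℝ) (w β : ℂ) (hd0 : 0 ≤ d) (hβ : d ≤ ‖w - β‖) :
    d * (1 / sq1 β) ≤ 4 * ((1 / sq1 w) * (1 + ‖w‖ ^ 2)) := by
  have hs := sq1_pos w
  have hB := sq1_pos β
  have h2 : d * (1 / sq1 β) ≤ sq1 w := by
    rw [mul_one_div, div_le_iff₀ hB]
    exact hβ.trans (abs_sub_le_sq1 w β)
  have hrhs : 4 * ((1 / sq1 w) * (1 + ‖w‖ ^ 2)) = 4 * sq1 w := by
    rw [← sq1_sq w]
    field_simp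
  rw [hrhs]
  linarith

open Set.Notation in
lemma infDist_frontier_le {Ω : Set ℂ} (hO : IsOpen Ω) {w β : ℂ} (hw : w ∈ Ω) (hβ : β ∉ Ω) :
    Metric.infDist w (frontier Ω) ≤ ‖w - β‖ := by
  have hseg : IsPreconnected (segment ℝ w β) := (convex_segment w β).isPreconnected
  have hnd : ¬ Disjoint (frontier Ω) (segment ℝ w β) := by
    intro hdisj
    have hclopen := isClopen_preimage_val hO hdisj
    haveI := Subtype.preconnectedSpace hseg
    have huniv : (segment ℝ w β ↓∩ Ω) = univ :=
      hclopen.eq_univ ⟨⟨w, left_mem_segment ℝ w β⟩, hw⟩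
    have : (⟨β, right_mem_segment ℝ w β⟩ : segment ℝ w β) ∈ segment ℝ w β ↓∩ Ω := by
      rw [huniv]; trivial
    exact hβ this
  obtain ⟨x, hxf, hxs⟩ := not_disjoint_iff.1 hnd
  have h1 : Metric.infDist w (frontier Ω) ≤ dist w x := Metric.infDist_le_dist_of_mem hxf
  have h2 := dist_add_dist_of_mem_segment hxs
  have h3 : dist w x ≤ dist w β := by
    have := dist_nonneg (x := x) (y := β)
    linarith
  rw [Complex.dist_eq w β] at h3
  linarith


lemma key (Ω : Set ℂ) (hO : IsOpen Ω) (hne : Ω.Nonempty) (hcne : Ωᶜ.Nonempty) (w : ℂ)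
    (hw : w ∈ Ω) :
    Metric.infDist w (frontier Ω) * sphDiamCompl Ω ≤
      4 * (deltaOm Ω w * (1 + ‖w‖ ^ 2)) := by
  rw [deltaOm, sphDiamCompl]
  set d := Metric.infDist w (frontier Ω) with hd
  have hd0 : 0 ≤ d := Metric.infDist_nonneg
  have hcompl : ∀ β ∈ Ωᶜ, d ≤ ‖w - β‖ := fun β hβ => infDist_frontier_le hO hw hβ
  set D := (fun a => sph w a) '' frontier Ω ∪
    (if Bornology.IsBounded Ω then ∅ else {1 / Real.sqrt (1 + ‖w‖ ^ 2)}) with hD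
  set T := ({ s | ∃ a ∈ Ωᶜ, ∃ b ∈ Ωᶜ, s = sph a b } ∪
    { s | ∃ a ∈ Ωᶜ, s = 1 / Real.sqrt (1 + ‖a‖ ^ 2) } ∪ {(0 : ℝ)}) with hT
  have hDnonneg : ∀ r ∈ D, 0 ≤ r := by
    rintro r (⟨a, _, rfl⟩ | hr)
    · exact sph_nonneg w a
    · by_cases hb : Bornology.IsBounded Ω
      · rw [if_pos hb] at hr
        exact absurd hr (notMem_empty r)
      · rw [if_neg hb, mem_singleton_iff] at hr
        rw [hr]
        positivity
  have hDne : D.Nonempty := by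
    by_cases hb : Bornology.IsBounded Ω
    · have hfr : (frontier Ω).Nonempty := by
        refine nonempty_frontier_iff.2 ⟨hne, ?_⟩
        intro h
        rw [h, compl_univ] at hcne
        exact Set.not_nonempty_empty hcne
      exact ⟨sph w hfr.choose, Or.inl (mem_image_of_mem _ hfr.choose_spec)⟩
    · refine ⟨1 / Real.sqrt (1 + ‖w‖ ^ 2), Or.inr ?_⟩
      rw [if_neg hb]
      exact rfl
  have hfrc : frontier Ω ⊆ Ωᶜ := by
    intro a ha
    rw [hO.frontier_eq] at ha
    exact ha.2
  have hmain : ∀ r ∈ D, d * sSup T ≤ 4 * (r * (1 + ‖w‖ ^ 2)) := by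
    intro r hr
    have hr0 := hDnonneg r hr
    have hTle : ∀ t ∈ T, d * t ≤ 4 * (r * (1 + ‖w‖ ^ 2)) := by
      rintro t ((⟨β, hβ, γ, hγ, rfl⟩ | ⟨β, hβ, rfl⟩) | ht)
      · -- t = sph β γ
        rcases hr with ⟨α, hαf, rfl⟩ | hr
        · exact caseA d w α β γ hd0
            (hcompl α (hfrc hαf)) (hcompl β hβ) (hcompl γ hγ)
        · by_cases hb : Bornology.IsBounded Ω
          · rw [if_pos hb] at hr
            exact absurd hr (notMem_empty r)
          · rw [if_neg hb, mem_singleton_iff] at hr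
            rw [hr]
            exact caseC1 d w β γ hd0 (hcompl β hβ) (hcompl γ hγ)
      · -- t = 1/√(1+|β|²)
        rcases hr with ⟨α, hαf, rfl⟩ | hr
        · exact caseB d w α β hd0 (hcompl α (hfrc hαf)) (hcompl β hβ)
        · by_cases hb : Bornology.IsBounded Ω
          · rw [if_pos hb] at hr
            exact absurd hr (notMem_empty r)
          · rw [if_neg hb, mem_singleton_iff] at hr
            rw [hr]
            exact caseC2 d w β hd0 (hcompl β hβ)
      · rw [mem_singleton_iff] at ht
        rw [ht, mul_zero]
        positivity
    rcases eq_or_lt_of_le hd0 with h0 | h0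
    · rw [← h0, zero_mul]
      positivity
    · have hb : sSup T ≤ (4 * (r * (1 + ‖w‖ ^ 2))) / d := by
        refine Real.sSup_le (fun t ht => ?_) (by positivity)
        rw [le_div_iff₀ h0, mul_comm]
        exact hTle t ht
      calc d * sSup T ≤ d * ((4 * (r * (1 + ‖w‖ ^ 2))) / d) :=
            mul_le_mul_of_nonneg_left hb hd0
        _ = 4 * (r * (1 + ‖w‖ ^ 2)) := by field_simp
  have hpos : (0 : ℝ) < 4 * (1 + ‖w‖ ^ 2) := by positivity
  have hfin : d * sSup T / (4 * (1 + ‖w‖ ^ 2)) ≤ sInf D := by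
    refine le_csInf hDne (fun r hr => ?_)
    rw [div_le_iff₀ hpos]
    calc d * sSup T ≤ 4 * (r * (1 + ‖w‖ ^ 2)) := hmain r hr
      _ = r * (4 * (1 + ‖w‖ ^ 2)) := by ring
  rw [div_le_iff₀ hpos] at hfin
  linarith

theorem C_mul_sphDiam_le_four_tildeC (Ω : Set ℂ) (hΩ : IsHyperbolicDomain Ω) (p : ℂ → ℂ)
    (hmaps : MapsTo p (ball (0 : ℂ) 1) Ω)
    (hsurj : SurjOn p (ball (0 : ℂ) 1) Ω)
    (hdiff : DifferentiableOn ℂ p (ball (0 : ℂ) 1))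
    (hcov : IsCoveringMap (Set.MapsTo.restrict p (ball (0 : ℂ) 1) Ω hmaps)) :
    sInf ((fun z => Metric.infDist (p z) (frontier Ω) /
        ((1 - ‖z‖ ^ 2) * ‖deriv p z‖)) '' ball (0 : ℂ) 1) * sphDiamCompl Ω ≤
      4 * sInf ((fun z => deltaOm Ω (p z) * (1 + ‖p z‖ ^ 2) /
        ((1 - ‖z‖ ^ 2) * ‖deriv p z‖)) '' ball (0 : ℂ) 1) := by
  obtain ⟨hO, hconn, hnontriv⟩ := hΩ
  have hne : Ω.Nonempty := hconn.nonempty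
  have hcne : Ωᶜ.Nonempty := hnontriv.nonempty
  have h0mem : (0 : ℂ) ∈ ball (0 : ℂ) 1 := mem_ball_self one_pos
  have hden : ∀ z ∈ ball (0 : ℂ) 1, 0 ≤ (1 - ‖z‖ ^ 2) * ‖deriv p z‖ := by
    intro z hz
    have hz1 : ‖z‖ < 1 := by
      simpa using mem_ball_zero_iff.1 hz
    have h1 := norm_nonneg z
    have h2 := norm_nonneg (deriv p z)
    exact mul_nonneg (by nlinarith) h2
  have hσ0 : 0 ≤ sphDiamCompl Ω := by
    rw [sphDiamCompl]
    refine le_csSup ⟨1, ?_⟩ (Or.inr rfl)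
    rintro t ((⟨a, _, b, _, rfl⟩ | ⟨a, _, rfl⟩) | ht)
    · exact sph_le_one a b
    · show 1 / sq1 a ≤ 1
      rw [div_le_one (sq1_pos a)]
      exact one_le_sq1 a
    · rw [mem_singleton_iff] at ht
      rw [ht]
      norm_num
  have hFbdd : BddBelow ((fun z => Metric.infDist (p z) (frontier Ω) /
      ((1 - ‖z‖ ^ 2) * ‖deriv p z‖)) '' ball (0 : ℂ) 1) := by
    refine ⟨0, ?_⟩
    rintro x ⟨z, hz, rfl⟩
    exact div_nonneg Metric.infDist_nonneg (hden z hz)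
  have hGne : ((fun z => deltaOm Ω (p z) * (1 + ‖p z‖ ^ 2) /
      ((1 - ‖z‖ ^ 2) * ‖deriv p z‖)) '' ball (0 : ℂ) 1).Nonempty :=
    ⟨_, mem_image_of_mem _ h0mem⟩
  have hpoint : ∀ z ∈ ball (0 : ℂ) 1,
      (Metric.infDist (p z) (frontier Ω) /
        ((1 - ‖z‖ ^ 2) * ‖deriv p z‖)) * sphDiamCompl Ω ≤
      4 * (deltaOm Ω (p z) * (1 + ‖p z‖ ^ 2) /
        ((1 - ‖z‖ ^ 2) * ‖deriv p z‖)) := by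
    intro z hz
    have hkey := key Ω hO hne hcne (p z) (hmaps hz)
    set c := (1 - ‖z‖ ^ 2) * ‖deriv p z‖ with hc
    have hc0 : 0 ≤ c := hden z hz
    rcases eq_or_lt_of_le hc0 with h0 | h0
    · rw [← h0, div_zero, div_zero, zero_mul, mul_zero]
    · rw [div_mul_eq_mul_div, ← mul_div_assoc]
      exact (div_le_div_iff_of_pos_right h0).2 hkey
  have hmono : ∀ z ∈ ball (0 : ℂ) 1,
      sInf ((fun z => Metric.infDist (p z) (frontier Ω) /
        ((1 - ‖z‖ ^ 2) * ‖deriv p z‖)) '' ball (0 : ℂ) 1) ≤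
      Metric.infDist (p z) (frontier Ω) /
        ((1 - ‖z‖ ^ 2) * ‖deriv p z‖) :=
    fun z hz => csInf_le hFbdd (mem_image_of_mem _ hz)
  have hall : ∀ z ∈ ball (0 : ℂ) 1,
      sInf ((fun z => Metric.infDist (p z) (frontier Ω) /
        ((1 - ‖z‖ ^ 2) * ‖deriv p z‖)) '' ball (0 : ℂ) 1) * sphDiamCompl Ω ≤
      4 * (deltaOm Ω (p z) * (1 + ‖p z‖ ^ 2) /
        ((1 - ‖z‖ ^ 2) * ‖deriv p z‖)) :=
    fun z hz => le_trans (mul_le_mul_of_nonneg_right (hmono z hz) hσ0) (hpoint z hz)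
  have hfin : sInf ((fun z => Metric.infDist (p z) (frontier Ω) /
        ((1 - ‖z‖ ^ 2) * ‖deriv p z‖)) '' ball (0 : ℂ) 1) * sphDiamCompl Ω / 4 ≤
      sInf ((fun z => deltaOm Ω (p z) * (1 + ‖p z‖ ^ 2) /
        ((1 - ‖z‖ ^ 2) * ‖deriv p z‖)) '' ball (0 : ℂ) 1) := by
    refine le_csInf hGne ?_
    rintro b ⟨z, hz, rfl⟩
    rw [div_le_iff₀ (by norm_num : (0 : ℝ) < 4)]
    have := hall z hz
    linarith
  rw [div_le_iff₀ (by norm_num : (0 : ℝ) < 4)] at hfin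
  linarith
end

section
/- Let Ω ⊆ ℂ be a hyperbolic domain and let z ∈ Ω satisfy ε_Ω(z)·|z| < 1. Then d_Ω(z) ≤ ε_Ω(z)·(1+|z|²) / (1 − ε_Ω(z)·|z|). -/
open Set Metric
open scoped Classical

lemma frontier_not_subset_singleton {Ω : Set ℂ} (hΩ : IsHyperbolicDomain Ω) (p : ℂ) :
    ¬ frontier Ω ⊆ {p} := by
  obtain ⟨hopen, hconn, x, hx, y, hy, hxy⟩ := hΩ
  intro hsub
  have hS : IsConnected ({p}ᶜ : Set ℂ) :=
    isConnected_compl_singleton_of_one_lt_rank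
      (by rw [Complex.rank_real_complex]; norm_num) p
  have hcov : ({p}ᶜ : Set ℂ) ⊆ Ω ∪ interior Ωᶜ := by
    intro w hw
    by_cases hwc : w ∈ closure Ω
    · left
      have hwf : w ∉ frontier Ω := fun hf => hw (hsub hf)
      rw [closure_eq_interior_union_frontier, hopen.interior_eq] at hwc
      exact hwc.resolve_right hwf
    · right
      rwa [interior_compl]
  have hUne : (({p}ᶜ : Set ℂ) ∩ Ω).Nonempty := by
    have hd := dense_compl_singleton (X := ℂ) p
    obtain ⟨w, hw1, hw2⟩ := hd.inter_open_nonempty Ω hopen hconn.nonempty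
    exact ⟨w, hw2, hw1⟩
  have hcompl_sub : Ωᶜ ⊆ interior Ωᶜ ∪ frontier Ω := by
    rw [← frontier_compl]
    intro w hw
    have hw' := subset_closure hw
    rwa [closure_eq_interior_union_frontier] at hw'
  have hVne : (({p}ᶜ : Set ℂ) ∩ interior Ωᶜ).Nonempty := by
    obtain ⟨q, hq, hqp⟩ : ∃ q, q ∈ Ωᶜ ∧ q ≠ p := by
      rcases eq_or_ne x p with rfl | hxp
      · exact ⟨y, hy, fun hyx => hxy hyx.symm⟩
      · exact ⟨x, hx, hxp⟩
    have hqf : q ∉ frontier Ω := fun hf => hqp (hsub hf)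
    exact ⟨q, hqp, (hcompl_sub hq).resolve_right hqf⟩
  obtain ⟨w, hw⟩ := hS.isPreconnected Ω (interior Ωᶜ) hopen isOpen_interior hcov hUne hVne
  exact (interior_subset hw.2.2 : w ∈ Ωᶜ) hw.2.1

set_option maxHeartbeats 1000000 in
theorem dist_le_eps_upper_bound (Ω : Set ℂ) (hΩ : IsHyperbolicDomain Ω) (z : ℂ) (hz : z ∈ Ω)
    (h : epsOm Ω z * ‖z‖ < 1) :
    Metric.infDist z (frontier Ω) ≤
      epsOm Ω z * (1 + ‖z‖ ^ 2) / (1 - epsOm Ω z * ‖z‖) := by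
  classical
  set I : ENNReal := ⨅ a ∈ frontier Ω, tauE z a with hI_def
  set J : ENNReal :=
    if Bornology.IsBounded Ω then ⊤ else 1 / ENNReal.ofReal (‖z‖) with hJ_def
  set p : ℂ := -((starRingEnd ℂ) z)⁻¹ with hp_def
  have hfin_of_ne : ∀ a : ℂ, a ≠ p → (1 : ℂ) + z * (starRingEnd ℂ) a ≠ 0 := by
    intro a hap hzero
    apply hap
    have h1 : z * (starRingEnd ℂ) a = -1 := by linear_combination hzero
    have h2 : (starRingEnd ℂ) z * a = -1 := by
      have h3 := congrArg (starRingEnd ℂ) h1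
      simpa [mul_comm] using h3
    have hzc : (starRingEnd ℂ) z ≠ 0 := by
      intro h0; rw [h0, zero_mul] at h2; exact (by norm_num : (0:ℂ) ≠ -1) h2
    rw [hp_def]
    apply mul_left_cancel₀ hzc
    rw [h2, mul_neg, mul_inv_cancel₀ hzc]
  obtain ⟨a₀, ha₀f, ha₀p⟩ : ∃ a, a ∈ frontier Ω ∧ a ≠ p := by
    have hns := frontier_not_subset_singleton hΩ p
    rw [Set.not_subset] at hns
    obtain ⟨a, ha, hap⟩ := hns
    exact ⟨a, ha, hap⟩
  have htau_ne_top : ∀ a : ℂ, a ≠ p → tauE z a ≠ ⊤ := by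
    intro a hap
    have hd : (0 : ℝ) < ‖1 + z * (starRingEnd ℂ) a‖ :=
      norm_pos_iff.mpr (hfin_of_ne a hap)
    exact (ENNReal.div_lt_top ENNReal.ofReal_ne_top
      (by simpa [ENNReal.ofReal_eq_zero, not_le] using hd)).ne
  have hI_ne_top : I ≠ ⊤ := by
    have hle : I ≤ tauE z a₀ := biInf_le _ ha₀f
    exact (lt_of_le_of_lt hle (lt_top_iff_ne_top.mpr (htau_ne_top a₀ ha₀p))).ne
  have hε_eq : epsOm Ω z = I.toReal := by
    rcases le_total I J with hIJ | hJI
    · simp only [epsOm]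
      rw [← hI_def, ← hJ_def, inf_eq_left.mpr hIJ]
    · by_cases hb : J = ⊤
      · simp only [epsOm]
        rw [← hI_def, ← hJ_def, hb, inf_top_eq]
      · exfalso
        have hnb : ¬ Bornology.IsBounded Ω := by
          intro hbb; exact hb (by rw [hJ_def, if_pos hbb])
        have hJval : J = 1 / ENNReal.ofReal (‖z‖) := by rw [hJ_def, if_neg hnb]
        have hz0 : ‖z‖ ≠ 0 := by
          intro h0
          apply hb
          rw [hJval, h0, ENNReal.ofReal_zero]
          simp
        have hε : epsOm Ω z = (‖z‖)⁻¹ := by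
          simp only [epsOm]
          rw [← hI_def, ← hJ_def, inf_eq_right.mpr hJI, hJval]
          rw [one_div, ← ENNReal.ofReal_inv_of_pos
            (lt_of_le_of_ne (norm_nonneg _) (Ne.symm hz0))]
          exact ENNReal.toReal_ofReal (by positivity)
        rw [hε, inv_mul_cancel₀ hz0] at h
        exact lt_irrefl 1 h
  set ε : ℝ := epsOm Ω z with hε_def
  set r : ℝ := ‖z‖ with hr_def
  have hr0 : 0 ≤ r := norm_nonneg _
  have hε0 : 0 ≤ ε := by rw [hε_eq]; exact ENNReal.toReal_nonneg
  set d : ℝ := Metric.infDist z (frontier Ω) with hd_def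
  have hd0 : 0 ≤ d := Metric.infDist_nonneg
  have hεr : ε * r < 1 := h
  have key : d * (1 - ε * r) ≤ ε * (1 + r ^ 2) := by
    apply le_of_forall_pos_le_add
    intro η hη
    have hC0 : (0:ℝ) < 1 + r ^ 2 + d * r := by positivity
    set δ : ℝ := min (η / (1 + r ^ 2 + d * r)) ((1 - ε * r) / (2 * (r + 1))) with hδ_def
    have hδ0 : 0 < δ := by
      apply lt_min
      · positivity
      · have h1 : 0 < 1 - ε * r := by linarith
        positivity
    have hδr : (ε + δ) * r < 1 := by
      have h1 : δ ≤ (1 - ε * r) / (2 * (r + 1)) := min_le_right _ _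
      have h2 : δ * r ≤ (1 - ε * r) / (2 * (r + 1)) * r :=
        mul_le_mul_of_nonneg_right h1 hr0
      have h3 : (1 - ε * r) / (2 * (r + 1)) * r ≤ (1 - ε * r) / 2 := by
        rw [div_mul_eq_mul_div, div_le_div_iff₀ (by positivity) (by norm_num)]
        nlinarith
      nlinarith
    have hδC : δ * (1 + r ^ 2 + d * r) ≤ η := by
      have h1 : δ ≤ η / (1 + r ^ 2 + d * r) := min_le_left _ _
      calc δ * (1 + r ^ 2 + d * r) ≤ (η / (1 + r ^ 2 + d * r)) * (1 + r ^ 2 + d * r) :=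
            mul_le_mul_of_nonneg_right h1 hC0.le
        _ = η := div_mul_cancel₀ _ hC0.ne'
    have hlt : I < I + ENNReal.ofReal δ :=
      ENNReal.lt_add_right hI_ne_top (by simpa [ENNReal.ofReal_eq_zero, not_le] using hδ0)
    have hlt' : ⨅ a ∈ frontier Ω, tauE z a < I + ENNReal.ofReal δ := by rw [← hI_def]; exact hlt
    rw [iInf_lt_iff] at hlt'
    obtain ⟨a, hlt'⟩ := hlt'
    rw [iInf_lt_iff] at hlt'
    obtain ⟨haf, hta⟩ := hlt'
    have hsum_ne : I + ENNReal.ofReal δ ≠ ⊤ :=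
      ENNReal.add_ne_top.mpr ⟨hI_ne_top, ENNReal.ofReal_ne_top⟩
    have hta_ne : tauE z a ≠ ⊤ := (hta.trans_le le_top).ne_top
    set t : ℝ := (tauE z a).toReal with ht_def
    have hεt : ε ≤ t := by
      rw [hε_eq]
      exact ENNReal.toReal_mono hta_ne (biInf_le _ haf)
    have htδ : t ≤ ε + δ := by
      have h1 := ENNReal.toReal_mono hsum_ne hta.le
      rw [ENNReal.toReal_add hI_ne_top ENNReal.ofReal_ne_top,
        ENNReal.toReal_ofReal hδ0.le, ← hε_eq] at h1
      exact h1
    have ht0 : 0 ≤ t := ENNReal.toReal_nonneg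
    have haΩ : a ∉ Ω := by
      have hmem : a ∈ closure Ω \ Ω := by rw [← hΩ.1.frontier_eq]; exact haf
      exact hmem.2
    have hza : z ≠ a := fun he => haΩ (he ▸ hz)
    have hnum : 0 < ‖z - a‖ := norm_pos_iff.mpr (sub_ne_zero.mpr hza)
    set D : ℝ := ‖1 + z * (starRingEnd ℂ) a‖ with hD_def
    have hD0 : 0 < D := by
      rcases lt_or_eq_of_le (norm_nonneg (1 + z * (starRingEnd ℂ) a))
        with hlt0 | heq0
      · exact hlt0
      · exfalso
        apply hta_ne
        rw [tauE, ← heq0, ENNReal.ofReal_zero,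
          ENNReal.div_zero (by simpa [ENNReal.ofReal_eq_zero, not_le] using hnum)]
    have ht_eq : t = ‖z - a‖ / D := by
      rw [ht_def, hD_def, tauE, ENNReal.toReal_div,
        ENNReal.toReal_ofReal (norm_nonneg _),
        ENNReal.toReal_ofReal (norm_nonneg _)]
    have hzaD : ‖z - a‖ = t * D := by
      rw [ht_eq]; field_simp
    have hDb : D ≤ 1 + r * ‖a‖ := by
      rw [hD_def, hr_def]
      calc ‖1 + z * (starRingEnd ℂ) a‖
          ≤ ‖(1:ℂ)‖ + ‖z * (starRingEnd ℂ) a‖ := norm_add_le _ _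
        _ = 1 + ‖z‖ * ‖a‖ := by
            rw [norm_one, norm_mul, Complex.norm_conj]
    have hab : ‖a‖ ≤ r + ‖z - a‖ := by
      have h1 : ‖a‖ ≤ ‖z‖ + ‖z - a‖ := by
        calc ‖a‖ = ‖z - (z - a)‖ := by congr 1; ring
          _ ≤ ‖z‖ + ‖z - a‖ := norm_sub_le _ _
      simpa [hr_def] using h1
    have hchain : ‖z - a‖ ≤ t * (1 + r ^ 2) + t * r * ‖z - a‖ := by
      nlinarith [mul_le_mul_of_nonneg_left hDb ht0,
        mul_le_mul_of_nonneg_left hab (mul_nonneg ht0 hr0)]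
    have hdle : d ≤ ‖z - a‖ := by
      rw [hd_def]
      have h1 := Metric.infDist_le_dist_of_mem (x := z) haf
      rwa [Complex.dist_eq] at h1
    have htr : t * r < 1 := by nlinarith [mul_le_mul_of_nonneg_right htδ hr0]
    have hzb : ‖z - a‖ * (1 - t * r) ≤ t * (1 + r ^ 2) := by nlinarith
    have hd2 : d * (1 - (ε + δ) * r) ≤ (ε + δ) * (1 + r ^ 2) := by
      have h1 : d * (1 - (ε + δ) * r) ≤ ‖z - a‖ * (1 - t * r) := by
        nlinarith [mul_le_mul_of_nonneg_right htδ hr0]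
      have h2 : t * (1 + r ^ 2) ≤ (ε + δ) * (1 + r ^ 2) := by nlinarith
      linarith
    nlinarith [hd2, hδC]
  have hpos : 0 < 1 - ε * r := by linarith
  exact (le_div_iff₀ hpos).mpr key
end

section
/- Let Ω ⊆ ℂ be a hyperbolic domain and let f : Ω → ℂ be an injective holomorphic map such that f(Ω) is a hyperbolic domain and such that for every open Euclidean disk D contained in Ω the image f(D) is a convex set (f is disk-convex). Then for every z ∈ Ω one has d_Ω(z)·|f′(z)| ≤ 2·d_{f(Ω)}(f(z)). -/
open Set Metric
open scoped Classical

theorem diskConvex_distortion (Ω : Set ℂ) (hΩ : IsHyperbolicDomain Ω) (f : ℂ → ℂ)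
    (hinj : InjOn f Ω) (hdiff : DifferentiableOn ℂ f Ω)
    (himg : IsHyperbolicDomain (f '' Ω))
    (hconv : ∀ (c : ℂ) (r : ℝ), ball c r ⊆ Ω → Convex ℝ (f '' ball c r))
    (z : ℂ) (hz : z ∈ Ω) :
    Metric.infDist z (frontier Ω) * ‖deriv f z‖ ≤
      2 * Metric.infDist (f z) (frontier (f '' Ω)) := by
  rcases le_or_gt (infDist z (frontier Ω)) 0 with hd0 | hd0
  · have h0 : infDist z (frontier Ω) = 0 := le_antisymm hd0 infDist_nonneg
    rw [h0, zero_mul]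
    exact mul_nonneg (by norm_num) infDist_nonneg
  set d := infDist z (frontier Ω) with hdd
  have hΩne : Ω ≠ univ := by
    obtain ⟨q, hq, -, -, -⟩ := hΩ.2.2
    intro h
    rw [h, compl_univ] at hq
    exact hq
  have hball : ball z d ⊆ Ω := by
    obtain ⟨y, hy, hyd⟩ := exists_mem_frontier_infDist_compl_eq_dist hz hΩne
    have h1 : d ≤ infDist z Ωᶜ := by rw [hyd]; exact infDist_le_dist_of_mem hy
    intro u hu
    by_contra hu'
    have h2 : infDist z Ωᶜ ≤ dist z u := infDist_le_dist_of_mem hu'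
    have h3 : dist z u < d := by rw [dist_comm]; exact mem_ball.mp hu
    linarith
  have hzball : z ∈ ball z d := mem_ball_self hd0
  have himgopen : IsOpen (f '' Ω) := himg.1
  have hfne : (frontier (f '' Ω)).Nonempty := by
    rw [nonempty_frontier_iff]
    refine ⟨⟨f z, z, hz, rfl⟩, ?_⟩
    obtain ⟨q, hq, -, -, -⟩ := himg.2.2
    intro h
    rw [h, compl_univ] at hq
    exact hq
  obtain ⟨w, hwf, hwd⟩ := isClosed_frontier.exists_infDist_eq_dist hfne (f z)
  have hwnotin : w ∉ f '' Ω := by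
    rw [himgopen.frontier_eq] at hwf
    exact hwf.2
  have hwnot : w ∉ f '' ball z d := fun h => hwnotin (image_mono (f := f) hball h)
  have hcv := hconv z d hball
  have hanb : AnalyticOnNhd ℂ f (ball z d) := (hdiff.mono hball).analyticOnNhd isOpen_ball
  have hopen : IsOpen (f '' ball z d) := by
    rcases hanb.is_constant_or_isOpen (convex_ball z d).isPreconnected with ⟨v, hv⟩ | h
    · exfalso
      have h2 : z + ((d / 2 : ℝ) : ℂ) ∈ ball z d := by
        rw [mem_ball, dist_eq_norm, add_sub_cancel_left, Complex.norm_real,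
          Real.norm_eq_abs, abs_of_pos (by linarith)]
        linarith
      have h3 : z = z + ((d / 2 : ℝ) : ℂ) :=
        hinj (hball hzball) (hball h2) (by rw [hv z hzball, hv _ h2])
      rw [left_eq_add, Complex.ofReal_eq_zero] at h3
      linarith
    · exact h _ (fun x hx => hx) isOpen_ball
  obtain ⟨ℓ, hℓ⟩ := geometric_hahn_banach_open_point hcv hopen hwnot
  set a : ℂ := (ℓ 1 : ℝ) + (ℓ Complex.I : ℝ) * Complex.I with ha
  have hare : a.re = ℓ 1 := by simp [ha]
  have haim : a.im = ℓ Complex.I := by simp [ha]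
  have hrep : ∀ u : ℂ, ℓ u = ((starRingEnd ℂ) a * u).re := by
    intro u
    have h1 : ℓ u = u.re * ℓ 1 + u.im * ℓ Complex.I := by
      conv_lhs => rw [← Complex.re_add_im u]
      rw [show (u.re : ℂ) + (u.im : ℂ) * Complex.I = u.re • (1 : ℂ) + u.im • Complex.I by
        simp [Complex.real_smul]]
      rw [map_add, map_smul, map_smul, smul_eq_mul, smul_eq_mul]
    rw [h1, Complex.mul_re, Complex.conj_re, Complex.conj_im, hare, haim]
    ring
  set c : ℝ := ℓ w with hc
  have hlt : ∀ y ∈ ball z d, ((starRingEnd ℂ) a * f y).re < c := by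
    intro y hy
    have := hℓ (f y) ⟨y, hy, rfl⟩
    rwa [hrep (f y)] at this
  have hpc : ((starRingEnd ℂ) a * f z).re < c := hlt z hzball
  set t : ℝ := c - ((starRingEnd ℂ) a * f z).re with ht
  have ht0 : 0 < t := sub_pos.mpr hpc
  set ζ₀ : ℂ := (starRingEnd ℂ) a * f z with hζ₀
  set ζ₁ : ℂ := ((2 * c : ℝ) : ℂ) - (starRingEnd ℂ) ζ₀ with hζ₁
  have hζ₁re : ζ₁.re = 2 * c - ζ₀.re := by simp [hζ₁]
  have hζ₁im : ζ₁.im = ζ₀.im := by simp [hζ₁]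
  set N : ℂ → ℂ := fun y => (starRingEnd ℂ) a * f y - ζ₀ with hN
  set D : ℂ → ℂ := fun y => (starRingEnd ℂ) a * f y - ζ₁ with hD
  set G : ℂ → ℂ := fun y => N y / D y with hG
  have hkey : ∀ y ∈ ball z d, ‖N y‖ < ‖D y‖ ∧ D y ≠ 0 := by
    intro y hy
    have hylt := hlt y hy
    have h1 : Complex.normSq (N y) < Complex.normSq (D y) := by
      simp only [hN, hD, Complex.normSq_apply, Complex.sub_re, Complex.sub_im, hζ₁re, hζ₁im]
      have h0re : ζ₀.re < c := hpc
      nlinarith [hylt, h0re]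
    constructor
    · nlinarith [h1, Complex.sq_norm (N y), Complex.sq_norm (D y),
        norm_nonneg (N y), norm_nonneg (D y)]
    · intro h0
      rw [h0, map_zero] at h1
      exact absurd h1 (not_lt.mpr (Complex.normSq_nonneg _))
  have hNz0 : N z = 0 := by simp [hN, hζ₀]
  have hG0 : G z = 0 := by simp [hG, hNz0]
  have hmaps : MapsTo G (ball z d) (ball (G z) 1) := by
    intro y hy
    obtain ⟨h3, h2⟩ := hkey y hy
    rw [hG0, mem_ball_zero_iff, hG]
    simp only [norm_div]
    exact (div_lt_one (norm_pos_iff.mpr h2)).mpr h3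
  have hfd : ∀ y ∈ ball z d, DifferentiableAt ℂ f y := fun y hy =>
    hdiff.differentiableAt (hΩ.1.mem_nhds (hball hy))
  have hNd : ∀ y ∈ ball z d, DifferentiableAt ℂ N y := fun y hy => by
    rw [hN]; exact (((hfd y hy).const_mul _).sub_const _)
  have hDd : ∀ y ∈ ball z d, DifferentiableAt ℂ D y := fun y hy => by
    rw [hD]; exact (((hfd y hy).const_mul _).sub_const _)
  have hGdiff : DifferentiableOn ℂ G (ball z d) := by
    intro y hy
    rw [hG]
    exact ((hNd y hy).div (hDd y hy) (hkey y hy).2).differentiableWithinAt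
  have hschwarz := Complex.norm_deriv_le_div_of_mapsTo_ball hGdiff (hmaps.mono_right ball_subset_closedBall) hd0
  have hderivN : deriv N z = (starRingEnd ℂ) a * deriv f z := by
    rw [hN, deriv_sub_const, deriv_const_mul _ (hfd z hzball)]
  have hderivD : deriv D z = (starRingEnd ℂ) a * deriv f z := by
    rw [hD, deriv_sub_const, deriv_const_mul _ (hfd z hzball)]
  have hDz0 : D z ≠ 0 := (hkey z hzball).2
  have hderivG : deriv G z = (starRingEnd ℂ) a * deriv f z / D z := by
    rw [hG, deriv_fun_div (hNd z hzball) (hDd z hzball) hDz0, hderivN, hderivD, hNz0]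
    field_simp
    ring
  have hDzval : D z = ((-(2 * t) : ℝ) : ℂ) := by
    apply Complex.ext
    · simp only [hD, Complex.sub_re, hζ₁re, Complex.ofReal_re]
      rw [← hζ₀]
      simp [ht]
      ring
    · simp only [hD, Complex.sub_im, hζ₁im, Complex.ofReal_im]
      rw [← hζ₀]
      ring
  have habsDz : ‖D z‖ = 2 * t := by
    rw [hDzval, Complex.norm_real, Real.norm_eq_abs, abs_neg, abs_of_pos (by linarith)]
  have ha0 : a ≠ 0 := by
    intro h0
    have h2 : ζ₀ = 0 := by rw [hζ₀, h0, map_zero, zero_mul]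
    have h3 : c = 0 := by rw [hc, hrep w, h0, map_zero, zero_mul, Complex.zero_re]
    have h1 := ht0
    rw [ht, h2, h3] at h1
    simp at h1
  have habs0 : 0 < ‖a‖ := norm_pos_iff.mpr ha0
  have hstep : ‖a‖ * ‖deriv f z‖ / (2 * t) ≤ 1 / d := by
    calc ‖a‖ * ‖deriv f z‖ / (2 * t)
        = ‖deriv G z‖ := by
          rw [hderivG, norm_div, norm_mul, habsDz, Complex.norm_conj]
      _ ≤ 1 / d := hschwarz
  have h2t : d * (‖a‖ * ‖deriv f z‖) ≤ 2 * t := by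
    rw [div_le_div_iff₀ (by linarith) hd0] at hstep
    linarith
  have hts : t ≤ ‖a‖ * dist (f z) w := by
    have h1 : t = ((starRingEnd ℂ) a * (w - f z)).re := by
      rw [ht, hc, hrep w, mul_sub, Complex.sub_re, hζ₀]
    calc t = ((starRingEnd ℂ) a * (w - f z)).re := h1
      _ ≤ ‖(starRingEnd ℂ) a * (w - f z)‖ := Complex.re_le_norm _
      _ = ‖a‖ * ‖w - f z‖ := by rw [norm_mul, Complex.norm_conj]
      _ = ‖a‖ * dist (f z) w := by
          rw [Complex.dist_eq, norm_sub_rev]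
  rw [hwd]
  nlinarith [h2t, hts, habs0, norm_nonneg (deriv f z)]
end

section
/- Let Ω ⊆ ℂ be a hyperbolic domain, let p : 𝔻 → Ω be a surjective holomorphic covering map from the unit disk, and let f : Ω → ℂ be an injective holomorphic disk-convex map such that f(Ω) is a hyperbolic domain. Then C(Ω) ≤ 2·C(f(Ω)), where C(Ω) := inf_{z∈𝔻} d_Ω(p(z)) / ((1−|z|²)·|p′(z)|) and C(f(Ω)) := inf_{z∈𝔻} d_{f(Ω)}(f(p(z))) / ((1−|z|²)·|f′(p(z))|·|p′(z)|). -/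
open Set Metric Filter
open scoped Classical Topology


/-- Schwarz-Pick type bound for maps into the right half-plane. -/
lemma halfplane_deriv_bound {G : ℂ → ℂ} {w : ℂ} {r : ℝ} (hr : 0 < r)
    (hd : DifferentiableOn ℂ G (ball w r))
    (hre : ∀ z ∈ ball w r, 0 < (G z).re) :
    ‖deriv G w‖ ≤ 2 * (G w).re / r := by
  set c := G w with hc
  have hcre : 0 < c.re := hre w (mem_ball_self hr)
  set d := (starRingEnd ℂ) c with hd'
  have hcd : c + d = (2 * c.re : ℝ) := by
    simp [hd', Complex.ext_iff, Complex.add_re, Complex.add_im, Complex.conj_re, Complex.conj_im]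
    ring
  have hcdne : c + d ≠ 0 := by
    rw [hcd]
    simp only [ne_eq, Complex.ofReal_eq_zero]
    positivity
  -- key inequality
  have key : ∀ ζ : ℂ, 0 < ζ.re → ‖ζ - c‖ < ‖ζ + d‖ := by
    intro ζ hζ
    have h1 : ‖ζ - c‖ ^ 2 < ‖ζ + d‖ ^ 2 := by
      rw [Complex.sq_norm, Complex.sq_norm]
      simp only [Complex.normSq_apply, Complex.sub_re, Complex.sub_im, Complex.add_re,
        Complex.add_im, hd', Complex.conj_re, Complex.conj_im]
      nlinarith [hζ, hcre]
    have h2 : 0 ≤ ‖ζ - c‖ := norm_nonneg _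
    have h3 : 0 ≤ ‖ζ + d‖ := norm_nonneg _
    nlinarith
  set H : ℂ → ℂ := fun z => (G z - c) / (G z + d) with hH
  have hden : ∀ z ∈ ball w r, G z + d ≠ 0 := by
    intro z hz
    intro h0
    have : (G z + d).re = 0 := by rw [h0]; simp
    have : (G z).re + c.re = 0 := by
      simpa [hd', Complex.add_re, Complex.conj_re] using this
    nlinarith [hre z hz]
  have hHd : DifferentiableOn ℂ H (ball w r) :=
    DifferentiableOn.div (hd.sub (differentiableOn_const _))
      (hd.add (differentiableOn_const _)) hden
  have hHw : H w = 0 := by simp [hH, ← hc]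
  have hmaps : MapsTo H (ball w r) (ball (H w) 1) := by
    intro z hz
    rw [hHw, mem_ball, dist_zero_right]
    rw [hH]
    simp only [norm_div]
    rw [div_lt_one (norm_pos_iff.mpr (hden z hz))]
    exact key (G z) (hre z hz)
  have schwarz := Complex.norm_deriv_le_div_of_mapsTo_ball hHd (hmaps.mono_right ball_subset_closedBall) hr
  -- compute deriv H w
  have hGd : HasDerivAt G (deriv G w) w :=
    ((hd.differentiableAt (isOpen_ball.mem_nhds (mem_ball_self hr)))).hasDerivAt
  have hHdw : HasDerivAt H ((deriv G w * (c + d) - (c - c) * deriv G w) / (c + d) ^ 2) w := by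
    have := (hGd.sub_const c).div (hGd.add_const d) (by rw [← hc]; exact hcdne)
    simpa [← hc, Pi.div_def, hH] using this
  have hderH : deriv H w = deriv G w / (c + d) := by
    rw [hHdw.deriv]
    field_simp
    ring
  rw [hderH] at schwarz
  rw [norm_div, hcd] at schwarz
  have habs : ‖((2 * c.re : ℝ) : ℂ)‖ = 2 * c.re := by
    rw [Complex.norm_real, Real.norm_eq_abs]
    rw [abs_of_pos (by positivity)]
  rw [habs] at schwarz
  rw [div_le_div_iff₀ (by positivity) hr] at schwarz
  rw [le_div_iff₀ hr]
  linarith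

/-- A holomorphic map on a disk with convex open image covers a disk of radius
`|f'(w)| r / 2` around `f w`. -/
lemma ball_subset_convex_image {f : ℂ → ℂ} {w : ℂ} {r : ℝ} (hr : 0 < r)
    (hd : DifferentiableOn ℂ f (ball w r))
    (hK : Convex ℝ (f '' ball w r)) (hKo : IsOpen (f '' ball w r)) :
    ball (f w) (‖deriv f w‖ * r / 2) ⊆ f '' ball w r := by
  intro a ha
  by_contra hnot
  obtain ⟨ℓ, hℓ⟩ := geometric_hahn_banach_open_point hK hKo hnot
  rw [mem_ball, dist_comm, dist_eq_norm] at ha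
  have hfw : (0:ℝ) < ‖deriv f w‖ := by
    rcases (norm_nonneg (deriv f w)).lt_or_eq with h | h
    · exact h
    · exfalso
      rw [← h] at ha
      simp only [zero_mul, zero_div] at ha
      have : (0:ℝ) ≤ ‖f w - a‖ := norm_nonneg _
      linarith
  -- represent ℓ as z ↦ (u * z).re
  set u : ℂ := (ℓ 1 : ℝ) - (ℓ Complex.I : ℝ) * Complex.I with hu
  have hrep : ∀ z : ℂ, (u * z).re = ℓ z := by
    intro z
    have hz : z = z.re • (1:ℂ) + z.im • Complex.I := by
      simp [Complex.ext_iff]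
    rw [hz, map_add, map_smul, map_smul]
    simp [hu, Complex.mul_re, Complex.sub_re, Complex.sub_im, Complex.mul_im]
    ring
  have hune : u ≠ 0 := by
    intro h0
    have h1 := hrep (f w)
    have h2 := hrep a
    rw [h0, zero_mul] at h1 h2
    have := hℓ (f w) (mem_image_of_mem f (mem_ball_self hr))
    rw [← h1, ← h2] at this
    exact lt_irrefl _ this
  set G : ℂ → ℂ := fun z => u * (a - f z) with hG
  have hGd : DifferentiableOn ℂ G (ball w r) :=
    (differentiableOn_const u).mul ((differentiableOn_const a).sub hd)
  have hGre : ∀ z ∈ ball w r, 0 < (G z).re := by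
    intro z hz
    have : (G z).re = ℓ a - ℓ (f z) := by
      rw [hG]
      simp only [mul_sub, Complex.sub_re, hrep]
    rw [this]
    have := hℓ (f z) (mem_image_of_mem f hz)
    linarith
  have hbound := halfplane_deriv_bound hr hGd hGre
  -- deriv G w = -(u * deriv f w)
  have hfd : HasDerivAt f (deriv f w) w :=
    (hd.differentiableAt (isOpen_ball.mem_nhds (mem_ball_self hr))).hasDerivAt
  have hGder : HasDerivAt G (u * (0 - deriv f w)) w :=
    (((hasDerivAt_const w a).sub hfd)).const_mul u
  have hd1 : ‖deriv G w‖ = ‖u‖ * ‖deriv f w‖ := by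
    rw [hGder.deriv]
    simp [map_mul]
  -- (G w).re ≤ |u| * ‖a - f w‖
  have hd2 : (G w).re ≤ ‖u‖ * ‖a - f w‖ := by
    calc (G w).re ≤ ‖G w‖ := Complex.re_le_norm _
    _ = ‖u‖ * ‖a - f w‖ := by rw [hG]; simp [map_mul]
  have hupos : 0 < ‖u‖ := norm_pos_iff.mpr hune
  rw [hd1] at hbound
  have : ‖u‖ * ‖deriv f w‖ ≤
      2 * (‖u‖ * ‖a - f w‖) / r := by
    refine hbound.trans ?_
    gcongr
  rw [le_div_iff₀ hr] at this
  have hnr : ‖a - f w‖ = ‖f w - a‖ := norm_sub_rev _ _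
  nlinarith [ha, hupos, hr]


lemma deriv_ne_zero_of_injOn {f : ℂ → ℂ} {U : Set ℂ} (hU : IsOpen U)
    (hd : DifferentiableOn ℂ f U) (hi : InjOn f U) {w : ℂ} (hw : w ∈ U) :
    deriv f w ≠ 0 := by
  intro h0
  have hmem : U ∈ 𝓝 w := hU.mem_nhds hw
  have hfa : AnalyticAt ℂ f w := hd.analyticAt hmem
  set g : ℂ → ℂ := fun z => f z - f w with hgdef
  have hga : AnalyticAt ℂ g w := hfa.sub analyticAt_const
  have hg0 : g w = 0 := sub_self _
  have hgderiv : deriv g w = 0 := by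
    rw [hgdef]
    rw [deriv_sub_const]
    exact h0
  have hne : ¬ (∀ᶠ z in 𝓝 w, g z = 0) := by
    intro hev
    have hUev : ∀ᶠ z in 𝓝 w, z ∈ U := hU.mem_nhds hw
    have h2 : ∀ᶠ z in 𝓝[≠] w, g z = 0 ∧ z ∈ U :=
      (hev.and hUev).filter_mono nhdsWithin_le_nhds
    obtain ⟨z, hz, hzne⟩ := (h2.and self_mem_nhdsWithin).exists
    have : f z = f w := by have := hz.1; simpa [hgdef, sub_eq_zero] using this
    exact hzne (hi hz.2 hw this)
  have horder : analyticOrderAt g w ≠ ⊤ := fun htop => hne (analyticOrderAt_eq_top.mp htop)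
  obtain ⟨n, hn⟩ := WithTop.ne_top_iff_exists.mp horder
  obtain ⟨h, hha, hh0, hhe⟩ := hga.analyticOrderAt_eq_natCast.mp hn.symm
  have hn0 : n ≠ 0 := by
    rintro rfl
    have := hhe.self_of_nhds
    simp [hg0] at this
    exact hh0 this.symm
  have hn1 : n ≠ 1 := by
    rintro rfl
    have hder2 : HasDerivAt (fun z => (z - w) ^ 1 • h z) (h w) w := by
      have h1 : HasDerivAt (fun z : ℂ => z - w) 1 w := (hasDerivAt_id w).sub_const w
      have h2 : HasDerivAt h (deriv h w) w := hha.differentiableAt.hasDerivAt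
      have := h1.mul h2
      simpa [Pi.mul_def] using this
    have : deriv g w = h w := by
      rw [Filter.EventuallyEq.deriv_eq hhe]
      exact hder2.deriv
    rw [hgderiv] at this
    exact hh0 this.symm
  have hn2 : 2 ≤ n := by omega
  set a : ℂ := h w with ha
  obtain ⟨b, hb⟩ := IsAlgClosed.exists_pow_nat_eq a (Nat.pos_of_ne_zero hn0)
  have hbne : b ≠ 0 := by
    intro hb0
    rw [hb0, zero_pow hn0] at hb
    exact hh0 hb.symm
  set ρ : ℂ → ℂ := fun z => Complex.exp (Complex.log (h z / a) / n) with hρ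
  have hdiva : AnalyticAt ℂ (fun z => h z / a) w := hha.div analyticAt_const hh0
  have hdw : h w / a = 1 := div_self hh0
  have hρa : AnalyticAt ℂ ρ w := by
    apply AnalyticAt.cexp
    exact AnalyticAt.div (hdiva.clog (by rw [hdw]; exact Complex.one_mem_slitPlane))
      analyticAt_const (Nat.cast_ne_zero.mpr hn0)
  have hρw : ρ w = 1 := by
    simp [hρ, hdw, Complex.log_one]
  set φ : ℂ → ℂ := fun z => (z - w) * (b * ρ z) with hφ
  have hφa : AnalyticAt ℂ φ w :=
    (analyticAt_id.sub analyticAt_const).mul (analyticAt_const.mul hρa)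
  have hφw : φ w = 0 := by simp [hφ]
  -- eventually φ ^ n = g
  have hev : ∀ᶠ z in 𝓝 w, φ z ^ n = g z := by
    have hρev : ∀ᶠ z in 𝓝 w, h z ≠ 0 := hha.continuousAt.eventually_ne hh0
    filter_upwards [hhe, hρev] with z hz hzne
    have hdz : h z / a ≠ 0 := div_ne_zero hzne hh0
    have hρn : ρ z ^ n = h z / a := by
      rw [hρ]
      rw [← Complex.exp_nat_mul]
      rw [mul_div_cancel₀ _ (Nat.cast_ne_zero.mpr hn0 : (n:ℂ) ≠ 0), Complex.exp_log hdz]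
    have : (b * ρ z) ^ n = h z := by
      rw [mul_pow, hb, hρn]
      field_simp
    rw [hφ]
    simp only
    rw [mul_pow, this, hz, smul_eq_mul]
  -- deriv φ w = b
  have hφder : HasDerivAt φ b w := by
    have h1 : HasDerivAt (fun z : ℂ => z - w) 1 w := (hasDerivAt_id w).sub_const w
    have h2 : HasDerivAt (fun z => b * ρ z) (b * deriv ρ w) w :=
      (hρa.differentiableAt.hasDerivAt).const_mul b
    have := h1.mul h2
    simpa [hρw, Pi.mul_def] using this
  have hstrict : HasStrictDerivAt φ b w := by
    have hcd : ContDiffAt ℂ 1 φ w := hφa.contDiffAt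
    have := hcd.hasStrictDerivAt one_ne_zero
    rwa [hφder.deriv] at this
  set e := hstrict.hasStrictFDerivAt_equiv hbne with he
  set ψ : ℂ → ℂ := e.localInverse _ _ _ with hψ
  have hL : ∀ᶠ x in 𝓝 w, ψ (φ x) = x := e.eventually_left_inverse
  have hψw : ψ 0 = w := by
    have := hL.self_of_nhds
    rwa [hφw] at this
  have hR : ∀ᶠ y in 𝓝 (0:ℂ), φ (ψ y) = y := by
    have := e.eventually_right_inverse
    rwa [hφw] at this
  have htend : Tendsto ψ (𝓝 0) (𝓝 w) := by
    have := e.localInverse_continuousAt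
    rw [hφw] at this
    rw [← hψw]
    exact this.tendsto
  -- primitive root
  have hprim := Complex.isPrimitiveRoot_exp n hn0
  set ω : ℂ := Complex.exp (2 * Real.pi * Complex.I / n) with hω
  have hω1 : ω ^ n = 1 := hprim.pow_eq_one
  have hωne : ω ≠ 1 := hprim.ne_one (by omega)
  have htendω : Tendsto (fun y : ℂ => ω * y) (𝓝 0) (𝓝 0) := by
    have hc : Continuous (fun y : ℂ => ω * y) := continuous_const.mul continuous_id
    have := hc.tendsto (0:ℂ)
    simpa using this
  have hUev : ∀ᶠ x in 𝓝 w, x ∈ U ∧ φ x ^ n = g x :=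
    (Filter.eventually_of_mem (hU.mem_nhds hw) (fun x hx => hx)).and hev
  have E2 : ∀ᶠ y in 𝓝 (0:ℂ), ψ y ∈ U ∧ φ (ψ y) ^ n = g (ψ y) := htend.eventually hUev
  have E3 : ∀ᶠ y in 𝓝 (0:ℂ),
      φ (ψ (ω * y)) = ω * y ∧ ψ (ω * y) ∈ U ∧ φ (ψ (ω * y)) ^ n = g (ψ (ω * y)) :=
    htendω.eventually (hR.and E2)
  have hall := (hR.and (E2.and E3)).filter_mono (nhdsWithin_le_nhds (s := {(0:ℂ)}ᶜ))
  obtain ⟨y, hy, hyne⟩ := (hall.and self_mem_nhdsWithin).exists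
  obtain ⟨hy1, ⟨hy2U, hy2⟩, hy3, hy4U, hy4⟩ := hy
  have hyne' : y ≠ 0 := hyne
  -- g values agree
  have hg1 : g (ψ y) = y ^ n := by rw [← hy2, hy1]
  have hg2 : g (ψ (ω * y)) = y ^ n := by
    rw [← hy4, hy3, mul_pow, hω1, one_mul]
  have hfeq : f (ψ y) = f (ψ (ω * y)) := by
    have : g (ψ y) = g (ψ (ω * y)) := by rw [hg1, hg2]
    simpa [hgdef, sub_left_inj] using this
  have hzeq : ψ y = ψ (ω * y) := hi hy2U hy4U hfeq
  have hyy : y = ω * y := by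
    calc y = φ (ψ y) := hy1.symm
    _ = φ (ψ (ω * y)) := by rw [hzeq]
    _ = ω * y := hy3
  have hfac : (1 - ω) * y = 0 := by linear_combination hyy
  rcases mul_eq_zero.mp hfac with h | h
  · exact hωne (sub_eq_zero.mp h).symm
  · exact hyne' h

lemma ball_infDist_frontier_subset {Ω : Set ℂ} (hopen : IsOpen Ω) {w : ℂ} (hw : w ∈ Ω) :
    ball w (infDist w (frontier Ω)) ⊆ Ω := by
  set r := infDist w (frontier Ω) with hrdef
  intro x hx
  by_contra hxΩ
  have hxw : dist x w < r := mem_ball.mp hx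
  have hnotfr : ∀ y ∈ ball w r, y ∉ frontier Ω := by
    intro y hy hyfr
    have h1 : infDist w (frontier Ω) ≤ dist w y := infDist_le_dist_of_mem hyfr
    have h2 : dist w y < r := mem_ball'.mp hy
    rw [← hrdef] at h1
    linarith
  have hxcl : x ∉ closure Ω := by
    intro hxc
    exact hnotfr x (mem_ball'.mpr (by rwa [dist_comm] at hxw)) (by
      rw [hopen.frontier_eq]; exact ⟨hxc, hxΩ⟩)
  have hr : 0 < r := lt_of_le_of_lt dist_nonneg hxw
  have hpc : IsPreconnected (ball w r) := (convex_ball w r).isPreconnected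
  have hsub : ball w r ⊆ Ω ∪ (closure Ω)ᶜ := by
    intro y hy
    by_cases hyΩ : y ∈ Ω
    · exact Or.inl hyΩ
    · refine Or.inr fun hyc => hnotfr y hy ?_
      rw [hopen.frontier_eq]; exact ⟨hyc, hyΩ⟩
  have hne := hpc Ω (closure Ω)ᶜ hopen isClosed_closure.isOpen_compl hsub
    ⟨w, mem_ball_self hr, hw⟩ ⟨x, hx, hxcl⟩
  obtain ⟨y, _, hy1, hy2⟩ := hne
  exact hy2 (subset_closure hy1)


theorem C_le_two_C_image (Ω : Set ℂ) (hΩ : IsHyperbolicDomain Ω) (p : ℂ → ℂ)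
    (hmaps : MapsTo p (ball (0 : ℂ) 1) Ω)
    (hsurj : SurjOn p (ball (0 : ℂ) 1) Ω)
    (hdiff : DifferentiableOn ℂ p (ball (0 : ℂ) 1))
    (hcov : IsCoveringMap (Set.MapsTo.restrict p (ball (0 : ℂ) 1) Ω hmaps))
    (f : ℂ → ℂ) (hinj : InjOn f Ω) (hfdiff : DifferentiableOn ℂ f Ω)
    (himg : IsHyperbolicDomain (f '' Ω))
    (hconv : ∀ (c : ℂ) (r : ℝ), ball c r ⊆ Ω → Convex ℝ (f '' ball c r)) :
    sInf ((fun z => Metric.infDist (p z) (frontier Ω) /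
        ((1 - ‖z‖ ^ 2) * ‖deriv p z‖)) '' ball (0 : ℂ) 1) ≤
      2 * sInf ((fun z => Metric.infDist (f (p z)) (frontier (f '' Ω)) /
        ((1 - ‖z‖ ^ 2) * (‖deriv f (p z)‖ * ‖deriv p z‖))) ''
          ball (0 : ℂ) 1) := by
  obtain ⟨hΩo, hΩc, hΩnt⟩ := hΩ
  obtain ⟨hIo, hIc, hInt⟩ := himg
  set A : ℂ → ℝ := fun z => Metric.infDist (p z) (frontier Ω) /
      ((1 - ‖z‖ ^ 2) * ‖deriv p z‖) with hA
  set B : ℂ → ℝ := fun z => Metric.infDist (f (p z)) (frontier (f '' Ω)) /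
      ((1 - ‖z‖ ^ 2) * (‖deriv f (p z)‖ * ‖deriv p z‖)) with hB
  -- nonnegativity of A on the ball
  have hAnn : ∀ x ∈ A '' ball (0 : ℂ) 1, (0:ℝ) ≤ x := by
    rintro _ ⟨z, hz, rfl⟩
    have hzb : ‖z‖ < 1 := mem_ball_zero_iff.mp hz
    have h1 : (0:ℝ) ≤ 1 - ‖z‖ ^ 2 := by
      have : ‖z‖ < 1 := hzb
      nlinarith [norm_nonneg z]
    exact div_nonneg infDist_nonneg (mul_nonneg h1 (norm_nonneg _))
  have hbdd : BddBelow (A '' ball (0 : ℂ) 1) := ⟨0, fun x hx => hAnn x hx⟩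
  -- key pointwise estimate
  have key : ∀ z ∈ ball (0 : ℂ) 1, A z ≤ 2 * B z := by
    intro z hz
    have hzb : ‖z‖ < 1 := mem_ball_zero_iff.mp hz
    have ht : (0:ℝ) < 1 - ‖z‖ ^ 2 := by nlinarith [norm_nonneg z]
    have hwΩ : p z ∈ Ω := hmaps hz
    rcases eq_or_ne (‖deriv p z‖) 0 with hP | hP
    · simp [hA, hB, hP]
    · have hPpos : 0 < ‖deriv p z‖ := (norm_nonneg _).lt_of_ne (Ne.symm hP)
      have hF : deriv f (p z) ≠ 0 := deriv_ne_zero_of_injOn hΩo hfdiff hinj hwΩ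
      have hFpos : 0 < ‖deriv f (p z)‖ := norm_pos_iff.mpr hF
      set w := p z with hwdef
      set dA := infDist w (frontier Ω) with hdA
      set dB := infDist (f w) (frontier (f '' Ω)) with hdB
      -- geometric key inequality
      have hgeom : dA * ‖deriv f w‖ ≤ 2 * dB := by
        rcases le_or_gt dA 0 with h0 | hdApos
        · have : dA = 0 := le_antisymm h0 infDist_nonneg
          rw [this, zero_mul]
          have : (0:ℝ) ≤ dB := infDist_nonneg
          linarith
        · have hball : ball w dA ⊆ Ω := ball_infDist_frontier_subset hΩo hwΩ
          have hconvK : Convex ℝ (f '' ball w dA) := hconv w dA hball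
          have hana : AnalyticOnNhd ℂ f Ω := fun x hx => hfdiff.analyticAt (hΩo.mem_nhds hx)
          have hopenK : IsOpen (f '' ball w dA) := by
            rcases hana.is_constant_or_isOpen hΩc.isPreconnected with ⟨c, hc⟩ | hop
            · exfalso
              set w' : ℂ := w + (dA / 2 : ℝ) with hw'
              have hw'b : w' ∈ ball w dA := by
                rw [mem_ball, hw', Complex.dist_eq]
                simp only [add_sub_cancel_left]
                rw [Complex.norm_real, Real.norm_eq_abs, abs_of_pos (by linarith)]
                linarith
              have hw'Ω : w' ∈ Ω := hball hw'b
              have : w = w' := hinj hwΩ hw'Ω (by rw [hc w hwΩ, hc w' hw'Ω])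
              rw [hw'] at this
              have h0 : ((dA / 2 : ℝ) : ℂ) = 0 := by linear_combination -this
              have h0' : dA / 2 = 0 := by exact_mod_cast h0
              linarith
            · exact hop (ball w dA) hball isOpen_ball
          have hsub := ball_subset_convex_image hdApos (hfdiff.mono hball) hconvK hopenK
          have hsub2 : ball (f w) (‖deriv f w‖ * dA / 2) ⊆ f '' Ω :=
            hsub.trans (image_mono hball)
          have hfront : (frontier (f '' Ω)).Nonempty := by
            rw [nonempty_frontier_iff]
            refine ⟨⟨f w, mem_image_of_mem f hwΩ⟩, fun huniv => ?_⟩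
            rw [huniv, compl_univ] at hInt
            exact Set.not_nontrivial_empty hInt
          have hρdB : ‖deriv f w‖ * dA / 2 ≤ dB := by
            by_contra hlt
            push_neg at hlt
            obtain ⟨y, hyfr, hyd⟩ := (infDist_lt_iff hfront).mp hlt
            have hyb : y ∈ ball (f w) (‖deriv f w‖ * dA / 2) :=
              mem_ball'.mpr hyd
            have hyin : y ∈ f '' Ω := hsub2 hyb
            rw [hIo.frontier_eq] at hyfr
            exact hyfr.2 hyin
          linarith
      -- conclude the pointwise bound
      rw [hA, hB]
      simp only
      rw [← hwdef, ← hdA, ← hdB]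
      have h2B : 2 * (dB / ((1 - ‖z‖ ^ 2) *
          (‖deriv f w‖ * ‖deriv p z‖))) =
          (2 * dB) / ((1 - ‖z‖ ^ 2) *
          (‖deriv f w‖ * ‖deriv p z‖)) := by ring
      rw [h2B, div_le_div_iff₀ (by positivity) (by positivity)]
      nlinarith [mul_le_mul_of_nonneg_right hgeom (mul_pos ht hPpos).le]
  -- put everything together
  have hne : (B '' ball (0 : ℂ) 1).Nonempty :=
    ⟨B 0, mem_image_of_mem _ (mem_ball_self one_pos)⟩
  have h1 : ∀ y ∈ B '' ball (0 : ℂ) 1, sInf (A '' ball (0 : ℂ) 1) / 2 ≤ y := by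
    rintro _ ⟨z, hz, rfl⟩
    have hle := csInf_le hbdd (mem_image_of_mem A hz)
    have hk := key z hz
    linarith
  have h2 := le_csInf hne h1
  linarith
end

section
/- For R > 0 let 𝔻_R = {z ∈ ℂ : |z| < R}. Then inf_{w∈𝔻_R} δ_{𝔻_R}(w) · (1+|w|²) · R/(R²−|w|²) equals 1/2 if R ≤ 1, and equals R/(1+R²) (which is < 1/2) if R > 1. -/
open Set Metric
open scoped Classical

/-- `δ` for the disk `{z : |z| < R}`: the infimum of `σ(w,a)` over the circle `|a| = R`. -/
noncomputable def deltaDR (R : ℝ) (w : ℂ) : ℝ :=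
  sInf ((fun a => sph w a) '' Metric.sphere (0 : ℂ) R)

private lemma sqrt_pos' (x y : ℝ) : 0 < Real.sqrt ((1 + x ^ 2) * (1 + y ^ 2)) :=
  Real.sqrt_pos.2 (by positivity)

private lemma deltaDR_eq (R : ℝ) (hR : 0 < R) (w : ℂ) (hw : ‖w‖ < R) :
    deltaDR R w = (R - ‖w‖) / Real.sqrt ((1 + ‖w‖ ^ 2) * (1 + R ^ 2)) := by
  set r := ‖w‖ with hr
  have hr0 : 0 ≤ r := norm_nonneg w
  set u : ℂ := if w = 0 then 1 else ((r : ℂ))⁻¹ * w with hu_def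
  have hu : ‖u‖ = 1 := by
    by_cases h : w = 0
    · simp [hu_def, h]
    · have hrne : r ≠ 0 := by simpa [hr] using (norm_ne_zero_iff.2 h)
      simp [hu_def, h, norm_mul, norm_inv, Complex.norm_real, Real.norm_eq_abs, abs_of_nonneg hr0, ← hr,
        inv_mul_cancel₀ hrne]
  have hwu : w = (r : ℂ) * u := by
    by_cases h : w = 0
    · simp [hu_def, h, hr]
    · have hrne : (r : ℂ) ≠ 0 := by
        simpa using Complex.ofReal_ne_zero.2 (by simpa [hr] using (norm_ne_zero_iff.2 h))
      rw [hu_def, if_neg h, ← mul_assoc, mul_inv_cancel₀ hrne, one_mul]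
  set a₀ : ℂ := (R : ℂ) * u with ha₀
  have ha₀_abs : ‖a₀‖ = R := by
    simp [ha₀, norm_mul, Complex.norm_real, Real.norm_eq_abs, abs_of_pos hR, hu]
  have ha₀_mem : a₀ ∈ Metric.sphere (0 : ℂ) R := by
    simp [Complex.dist_eq, ha₀_abs]
  have hdiff : ‖w - a₀‖ = R - r := by
    have : w - a₀ = ((r - R : ℝ) : ℂ) * u := by
      rw [hwu, ha₀]; push_cast; ring
    rw [this, norm_mul, Complex.norm_real, Real.norm_eq_abs, hu, mul_one, abs_of_nonpos (by linarith)]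
    ring
  have hval : sph w a₀ = (R - r) / Real.sqrt ((1 + r ^ 2) * (1 + R ^ 2)) := by
    unfold sph
    rw [hdiff, ha₀_abs]
  have hbdd : BddBelow ((fun a => sph w a) '' Metric.sphere (0 : ℂ) R) := by
    refine ⟨0, fun x hx => ?_⟩
    obtain ⟨a, _, rfl⟩ := hx
    exact div_nonneg (norm_nonneg _) (Real.sqrt_nonneg _)
  refine le_antisymm ?_ ?_
  · calc deltaDR R w ≤ sph w a₀ := csInf_le hbdd (mem_image_of_mem _ ha₀_mem)
      _ = _ := hval
  · refine le_csInf ⟨_, mem_image_of_mem _ ha₀_mem⟩ ?_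
    rintro b ⟨a, ha, rfl⟩
    show (R - r) / Real.sqrt ((1 + r ^ 2) * (1 + R ^ 2)) ≤ sph w a
    have haR : ‖a‖ = R := by
      simpa [Complex.dist_eq] using ha
    have h1 : R - r ≤ ‖w - a‖ := by
      have := norm_sub_norm_le a w
      rw [haR] at this
      calc R - r ≤ ‖a - w‖ := this
        _ = ‖w - a‖ := by rw [← norm_neg]; ring_nf
    unfold sph
    rw [haR]
    exact div_le_div_of_nonneg_right h1 (sqrt_pos' r R).le

private lemma F_eq (R : ℝ) (hR : 0 < R) (w : ℂ) (hw : ‖w‖ < R) :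
    deltaDR R w * ((1 + ‖w‖ ^ 2) * (R / (R ^ 2 - ‖w‖ ^ 2))) =
      R * (1 + ‖w‖ ^ 2) /
        (Real.sqrt ((1 + ‖w‖ ^ 2) * (1 + R ^ 2)) * (R + ‖w‖)) := by
  set r := ‖w‖ with hr
  have hr0 : 0 ≤ r := norm_nonneg w
  have hs : 0 < Real.sqrt ((1 + r ^ 2) * (1 + R ^ 2)) := sqrt_pos' r R
  have h1 : R ^ 2 - r ^ 2 ≠ 0 := by nlinarith
  have h2 : R + r ≠ 0 := by positivity
  rw [deltaDR_eq R hR w hw, ← hr]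
  field_simp
  ring

private lemma lb_half (R : ℝ) (hR : 0 < R) (hR1 : R ≤ 1) (r : ℝ) (hr0 : 0 ≤ r) (hrR : r < R) :
    1 / 2 ≤ R * (1 + r ^ 2) / (Real.sqrt ((1 + r ^ 2) * (1 + R ^ 2)) * (R + r)) := by
  set s := Real.sqrt ((1 + r ^ 2) * (1 + R ^ 2)) with hsdef
  have hs : 0 < s := sqrt_pos' r R
  have hs2 : s ^ 2 = (1 + r ^ 2) * (1 + R ^ 2) := Real.sq_sqrt (by positivity)
  have h1R : 0 ≤ 1 - R ^ 2 := by nlinarith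
  have hq : 0 ≤ (1 - 3 * R ^ 2) * r + R * (3 - R ^ 2) := by
    nlinarith [mul_nonneg hr0 h1R, mul_nonneg hR.le h1R]
  have hp : (1 + R ^ 2) * (R + r) ^ 2 ≤ 4 * R ^ 2 * (1 + r ^ 2) := by
    nlinarith [mul_nonneg (sub_nonneg.2 hrR.le) hq]
  have ha2 : (s * (R + r)) ^ 2 ≤ (2 * (R * (1 + r ^ 2))) ^ 2 := by
    have := mul_le_mul_of_nonneg_left hp (by positivity : (0:ℝ) ≤ 1 + r ^ 2)
    nlinarith [hs2]
  have hapos : 0 < s * (R + r) := mul_pos hs (by linarith)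
  have hbpos : 0 < 2 * (R * (1 + r ^ 2)) := by positivity
  have hkey : s * (R + r) ≤ 2 * (R * (1 + r ^ 2)) := by
    nlinarith [ha2, hapos, hbpos]
  rw [le_div_iff₀ (by positivity)]
  linarith

private lemma lb_gen (R : ℝ) (hR : 0 < R) (r : ℝ) (hr0 : 0 ≤ r) (hrR : r < R) :
    R / (1 + R ^ 2) ≤ R * (1 + r ^ 2) / (Real.sqrt ((1 + r ^ 2) * (1 + R ^ 2)) * (R + r)) := by
  set s := Real.sqrt ((1 + r ^ 2) * (1 + R ^ 2)) with hsdef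
  have hs : 0 < s := sqrt_pos' r R
  have hs2 : s ^ 2 = (1 + r ^ 2) * (1 + R ^ 2) := Real.sq_sqrt (by positivity)
  have hsge : R + r ≤ s := by
    rw [hsdef, Real.le_sqrt (by positivity) (by positivity)]
    nlinarith [sq_nonneg (1 - r * R)]
  rw [div_le_div_iff₀ (by positivity) (by positivity)]
  have : s * (R + r) ≤ s ^ 2 := by nlinarith
  nlinarith [hR.le, hs.le]

theorem tildeC_disk (R : ℝ) (hR : 0 < R) :
    (sInf ((fun w => deltaDR R w * ((1 + ‖w‖ ^ 2) * (R / (R ^ 2 - ‖w‖ ^ 2)))) ''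
        ball (0 : ℂ) R) = if R ≤ 1 then 1 / 2 else R / (1 + R ^ 2)) ∧
      (1 < R → R / (1 + R ^ 2) < 1 / 2) := by
  constructor
  · set f : ℂ → ℝ := fun w =>
      deltaDR R w * ((1 + ‖w‖ ^ 2) * (R / (R ^ 2 - ‖w‖ ^ 2))) with hf
    set S := f '' ball (0 : ℂ) R with hS
    have hball : ∀ w : ℂ, w ∈ ball (0 : ℂ) R ↔ ‖w‖ < R := by
      intro w; simp [mem_ball, Complex.dist_eq]
    have hfval : ∀ w : ℂ, w ∈ ball (0 : ℂ) R →
        f w = R * (1 + ‖w‖ ^ 2) /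
          (Real.sqrt ((1 + ‖w‖ ^ 2) * (1 + R ^ 2)) * (R + ‖w‖)) := by
      intro w hw
      exact F_eq R hR w ((hball w).1 hw)
    have hne : S.Nonempty := ⟨f 0, mem_image_of_mem _ (by simpa [hball] using hR)⟩
    have hlb : ∀ x ∈ S, R / (1 + R ^ 2) ≤ x := by
      rintro x ⟨w, hw, rfl⟩
      rw [hfval w hw]
      exact lb_gen R hR _ (norm_nonneg w) ((hball w).1 hw)
    have hbdd : BddBelow S := ⟨R / (1 + R ^ 2), hlb⟩
    split_ifs with h
    · -- R ≤ 1
      refine le_antisymm ?_ ?_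
      · rw [Real.sInf_le_iff hbdd hne]
        intro ε hε
        set η := min ε 1 with hηdef
        have hη0 : 0 < η := lt_min hε one_pos
        have hηε : η ≤ ε := min_le_left _ _
        have hη1 : η ≤ 1 := min_le_right _ _
        set t := R * (1 - η / 2) with htdef
        have ht0 : 0 ≤ t := by nlinarith
        have htR : t < R := by nlinarith
        have habs : ‖((t : ℝ) : ℂ)‖ = t := by
          rw [Complex.norm_real, Real.norm_eq_abs, abs_of_nonneg ht0]
        have hmem : ((t : ℝ) : ℂ) ∈ ball (0 : ℂ) R := by
          rw [hball, habs]; exact htR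
        refine ⟨f ((t : ℝ) : ℂ), mem_image_of_mem _ hmem, ?_⟩
        rw [hfval _ hmem, habs]
        set s := Real.sqrt ((1 + t ^ 2) * (1 + R ^ 2)) with hsdef
        have hs : 0 < s := sqrt_pos' t R
        have hsge : 1 + t ^ 2 ≤ s := by
          rw [hsdef, Real.le_sqrt (by positivity) (by positivity)]
          nlinarith [mul_nonneg (mul_nonneg (sub_nonneg.2 htR.le)
            (by linarith : (0:ℝ) ≤ R + t)) (by positivity : (0:ℝ) ≤ 1 + t ^ 2)]
        have h1 : R * (1 + t ^ 2) / (s * (R + t)) ≤ R / (R + t) := by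
          rw [div_le_div_iff₀ (by positivity) (by positivity)]
          have : (1 + t ^ 2) * (R + t) ≤ s * (R + t) :=
            mul_le_mul_of_nonneg_right hsge (by positivity)
          nlinarith
        have h2 : R / (R + t) < 1 / 2 + ε := by
          rw [div_lt_iff₀ (by positivity)]
          have hRt : R + t = R * (2 - η / 2) := by rw [htdef]; ring
          rw [hRt]
          nlinarith [mul_nonneg hε.le (sub_nonneg.2 hη1)]
        linarith
      · refine le_csInf hne ?_
        rintro x ⟨w, hw, rfl⟩
        rw [hfval w hw]
        exact lb_half R hR h _ (norm_nonneg w) ((hball w).1 hw)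
    · -- R > 1
      push_neg at h
      refine le_antisymm ?_ (le_csInf hne hlb)
      have hRinv0 : 0 < R⁻¹ := by positivity
      have habs : ‖((R⁻¹ : ℝ) : ℂ)‖ = R⁻¹ := by
        rw [Complex.norm_real, Real.norm_eq_abs, abs_of_pos hRinv0]
      have hmem : (((R⁻¹ : ℝ) : ℂ)) ∈ ball (0 : ℂ) R := by
        rw [hball, habs]
        calc R⁻¹ < 1 := by rw [inv_lt_one_iff₀]; right; exact h
          _ < R := h
      have hval : f (((R⁻¹ : ℝ) : ℂ)) = R / (1 + R ^ 2) := by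
        rw [hfval _ hmem, habs]
        have hsq : (1 + (R⁻¹) ^ 2) * (1 + R ^ 2) = ((1 + R ^ 2) / R) ^ 2 := by
          field_simp; ring
        rw [hsq, Real.sqrt_sq (by positivity)]
        field_simp
      calc sInf S ≤ f (((R⁻¹ : ℝ) : ℂ)) := csInf_le hbdd (mem_image_of_mem _ hmem)
        _ = R / (1 + R ^ 2) := hval
  · intro h
    rw [div_lt_iff₀ (by positivity)]
    nlinarith [sq_nonneg (R - 1)]
end
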